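/- arXiv:1407.5890 — 6 statements merged into one kernel-verified Lean document; each statement's English description precedes it below -/
import Mathlib

section
/- For every α > 0 there exist constants C ≥ 1 and β > 0 such that for every μ > 0, every continuous h : [0,∞) → ℂ, and every twice continuously differentiable v : [0,∞) → ℂ satisfying the ordinary differential equation v''(t) + v'(t) + (μ⁴ + α) v(t) + μ² h(t) = 0 for all t ≥ 0, the quantity N(t) := (μ⁻²|v'(t)|² + μ²|v(t)|² + α μ⁻²|v(t)|²)^{1/2} satisfies N(t) ≤ C e^{−βt} N(0) + C ∫₀ᵗ e^{−β(t−s)} μ |h(s)| ds for all t ≥ 0. (This is the linear hyperbolic Cahn–Hilliard–Oono dissipative estimate at a single Fourier frequency ξ with μ = 2π‖ξ‖, with constants uniform in the frequency.) -/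
open Set Topology
set_option maxHeartbeats 1000000

lemma cs2 (a b c d : ℝ) : a*c + b*d ≤ Real.sqrt (a^2+b^2) * Real.sqrt (c^2+d^2) := by
  rw [← Real.sqrt_mul (by positivity)]
  calc a*c+b*d ≤ Real.sqrt ((a*c+b*d)^2) := by
        rw [Real.sqrt_sq_eq_abs]; exact le_abs_self _
  _ ≤ Real.sqrt ((a^2+b^2)*(c^2+d^2)) :=
      Real.sqrt_le_sqrt (by nlinarith [sq_nonneg (a*d-b*c)])

lemma sqrt2_le : Real.sqrt 2 ≤ 1.5 := by
  rw [show (1.5:ℝ) = Real.sqrt (1.5^2) from (Real.sqrt_sq (by norm_num)).symm]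
  exact Real.sqrt_le_sqrt (by norm_num)

lemma sqrt_add_le' (a b : ℝ) (ha : 0 ≤ a) (hb : 0 ≤ b) :
    Real.sqrt (a+b) ≤ Real.sqrt a + Real.sqrt b := by
  have h : a + b ≤ (Real.sqrt a + Real.sqrt b)^2 := by
    nlinarith [Real.sq_sqrt ha, Real.sq_sqrt hb,
      mul_nonneg (Real.sqrt_nonneg a) (Real.sqrt_nonneg b)]
  calc Real.sqrt (a+b) ≤ Real.sqrt ((Real.sqrt a + Real.sqrt b)^2) := Real.sqrt_le_sqrt h
  _ = Real.sqrt a + Real.sqrt b := Real.sqrt_sq (by positivity)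

lemma phi_bd (γ κ P Q P1 Q1 : ℝ) (hγ0 : 0 < γ) (hκ0 : 0 < κ)
    (hκ1 : κ ≤ 1/2) (hκγ : 2*κ ≤ γ) :
    0 ≤ P1*P1 + Q1*Q1 + γ*(P*P+Q*Q)
    ∧ (P1*P1 + Q1*Q1 + γ*(P*P+Q*Q))/2
        ≤ P1*P1 + Q1*Q1 + γ*(P*P+Q*Q) + 2*κ*(P*P1+Q*Q1)
    ∧ P1*P1 + Q1*Q1 + γ*(P*P+Q*Q) + 2*κ*(P*P1+Q*Q1)
        ≤ (3/2)*(P1*P1 + Q1*Q1 + γ*(P*P+Q*Q)) := by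
  have hκ2 : 4*κ^2 ≤ γ := by nlinarith
  have hPQ : 0 ≤ P*P + Q*Q := by nlinarith [mul_self_nonneg P, mul_self_nonneg Q]
  have hPQ1 : 0 ≤ P1*P1 + Q1*Q1 := by nlinarith [mul_self_nonneg P1, mul_self_nonneg Q1]
  refine ⟨by nlinarith [mul_nonneg hγ0.le hPQ], ?_, ?_⟩
  · nlinarith [sq_nonneg (P1+2*κ*P), sq_nonneg (Q1+2*κ*Q),
      mul_nonneg (sub_nonneg.2 hκ2) hPQ]
  · nlinarith [sq_nonneg (P1-2*κ*P), sq_nonneg (Q1-2*κ*Q),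
      mul_nonneg (sub_nonneg.2 hκ2) hPQ]

/-- Key pointwise differential inequality. -/
lemma ptwise (γ κ m P Q P1 Q1 fr fi : ℝ) (hγ0 : 0 < γ) (hκ0 : 0 < κ)
    (hκ1 : κ ≤ 1/2) (hκγ : 2*κ ≤ γ)
    (hm : m = Real.sqrt (fr^2+fi^2)) :
    ((-P1-γ*P-fr)*P1 + P1*(-P1-γ*P-fr)) + ((-Q1-γ*Q-fi)*Q1 + Q1*(-Q1-γ*Q-fi))
      + γ*((P1*P + P*P1) + (Q1*Q + Q*Q1))
      + 2*κ*((P1*P1 + P*(-P1-γ*P-fr)) + (Q1*Q1 + Q*(-Q1-γ*Q-fi)))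
    ≤ -(2*(κ/3)) * (P1*P1 + Q1*Q1 + γ*(P*P+Q*Q) + 2*κ*(P*P1+Q*Q1))
      + 5 * m * Real.sqrt (P1*P1 + Q1*Q1 + γ*(P*P+Q*Q) + 2*κ*(P*P1+Q*Q1)) := by
  have hκ2 : 4*κ^2 ≤ γ := by nlinarith
  have hPQ : 0 ≤ P*P + Q*Q := by nlinarith [mul_self_nonneg P, mul_self_nonneg Q]
  have hPQ1 : 0 ≤ P1*P1 + Q1*Q1 := by nlinarith [mul_self_nonneg P1, mul_self_nonneg Q1]
  obtain ⟨he0, hΦ1, hΦ2⟩ := phi_bd γ κ P Q P1 Q1 hγ0 hκ0 hκ1 hκγ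
  set e := P1*P1 + Q1*Q1 + γ*(P*P+Q*Q) with he
  set Φ := P1*P1 + Q1*Q1 + γ*(P*P+Q*Q) + 2*κ*(P*P1+Q*Q1) with hΦ
  have hΦ0 : 0 ≤ Φ := le_trans (by linarith) hΦ1
  have hm0 : 0 ≤ m := by rw [hm]; positivity
  have hX : -2*(P1*fr + Q1*fi) - 2*κ*(P*fr + Q*fi) ≤ 3 * m * Real.sqrt e := by
    have h1 : (-2*P1)*fr + (-2*Q1)*fi ≤ Real.sqrt ((-2*P1)^2+(-2*Q1)^2) * Real.sqrt (fr^2+fi^2) :=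
      cs2 _ _ _ _
    have h2 : (-2*κ*P)*fr + (-2*κ*Q)*fi
        ≤ Real.sqrt ((-2*κ*P)^2+(-2*κ*Q)^2) * Real.sqrt (fr^2+fi^2) := cs2 _ _ _ _
    have h3 : Real.sqrt ((-2*P1)^2+(-2*Q1)^2) ≤ 2 * Real.sqrt e := by
      rw [show (2:ℝ) * Real.sqrt e = Real.sqrt (4*e) by
        rw [show (4:ℝ)*e = 2^2*e by ring, Real.sqrt_mul (by positivity), Real.sqrt_sq (by norm_num)]]
      apply Real.sqrt_le_sqrt
      rw [he]
      nlinarith [mul_nonneg hγ0.le hPQ]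
    have h4 : Real.sqrt ((-2*κ*P)^2+(-2*κ*Q)^2) ≤ Real.sqrt e := by
      apply Real.sqrt_le_sqrt
      rw [he]
      nlinarith [mul_nonneg (sub_nonneg.2 hκ2) hPQ]
    have hmm : 0 ≤ Real.sqrt (fr^2+fi^2) := Real.sqrt_nonneg _
    calc -2*(P1*fr + Q1*fi) - 2*κ*(P*fr + Q*fi)
        = ((-2*P1)*fr + (-2*Q1)*fi) + ((-2*κ*P)*fr + (-2*κ*Q)*fi) := by ring
      _ ≤ Real.sqrt ((-2*P1)^2+(-2*Q1)^2) * Real.sqrt (fr^2+fi^2)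
          + Real.sqrt ((-2*κ*P)^2+(-2*κ*Q)^2) * Real.sqrt (fr^2+fi^2) := add_le_add h1 h2
      _ ≤ (2*Real.sqrt e) * m + Real.sqrt e * m := by
          rw [hm]
          exact add_le_add (mul_le_mul_of_nonneg_right h3 hmm)
            (mul_le_mul_of_nonneg_right h4 hmm)
      _ = 3 * m * Real.sqrt e := by ring
  have hes : Real.sqrt e ≤ 1.5 * Real.sqrt Φ := by
    have h5 : Real.sqrt e ≤ Real.sqrt (2*Φ) := Real.sqrt_le_sqrt (by linarith)
    rw [Real.sqrt_mul (by norm_num)] at h5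
    have h6 := mul_le_mul_of_nonneg_right sqrt2_le (Real.sqrt_nonneg Φ)
    linarith
  have hdamp : ((-P1-γ*P-fr)*P1 + P1*(-P1-γ*P-fr)) + ((-Q1-γ*Q-fi)*Q1 + Q1*(-Q1-γ*Q-fi))
      + γ*((P1*P + P*P1) + (Q1*Q + Q*Q1))
      + 2*κ*((P1*P1 + P*(-P1-γ*P-fr)) + (Q1*Q1 + Q*(-Q1-γ*Q-fi)))
      ≤ -κ*e + (-2*(P1*fr + Q1*fi) - 2*κ*(P*fr + Q*fi)) := by
    rw [he]
    nlinarith [sq_nonneg (P1+2*κ*P), sq_nonneg (Q1+2*κ*Q),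
      mul_nonneg hκ0.le (mul_nonneg (sub_nonneg.2 hκγ) hPQ),
      mul_nonneg (show (0:ℝ) ≤ 3/2 - 3*κ by linarith) hPQ1]
  have hfin : -κ*e + 3*m*Real.sqrt e ≤ -(2*(κ/3))*Φ + 5*m*Real.sqrt Φ := by
    have h5 : 3*m*Real.sqrt e ≤ 4.5*m*Real.sqrt Φ := by
      have h7 := mul_le_mul_of_nonneg_left hes (by positivity : (0:ℝ) ≤ 3*m)
      nlinarith
    have h6 : -κ*e ≤ -(2*(κ/3))*Φ := by nlinarith
    have h7 : (4.5:ℝ)*m*Real.sqrt Φ ≤ 5*m*Real.sqrt Φ := by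
      nlinarith [mul_nonneg hm0 (Real.sqrt_nonneg Φ)]
    linarith
  calc _ ≤ -κ*e + (-2*(P1*fr + Q1*fi) - 2*κ*(P*fr + Q*fi)) := hdamp
    _ ≤ -κ*e + 3*m*Real.sqrt e := by linarith
    _ ≤ _ := hfin

lemma norm_sq_complex (z : ℂ) : ‖z‖^2 = z.re*z.re + z.im*z.im := by
  rw [← Complex.normSq_eq_norm_sq]; rfl

lemma sqrt_normSq (z : ℂ) : Real.sqrt (z.re*z.re + z.im*z.im) = ‖z‖ := by
  rw [show z.re*z.re + z.im*z.im = Complex.normSq z from rfl, ← Complex.norm_def]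

/-- Dissipative estimate for the linear hyperbolic Cahn–Hilliard–Oono equation at a
single Fourier frequency `μ = 2π‖ξ‖`: the ODE `v'' + v' + (μ⁴+α)v + μ²h = 0` satisfies
`N(t) ≤ C e^{-βt} N(0) + C ∫₀ᵗ e^{-β(t-s)} μ|h(s)| ds` with
`N(t) = (μ⁻²|v'|² + μ²|v|² + αμ⁻²|v|²)^{1/2}`, where `C ≥ 1` and `β > 0` depend only
on `α` (uniformly in the frequency `μ`). -/
theorem linCHO_fourier_mode_estimate (α : ℝ) (hα : 0 < α) :
    ∃ C : ℝ, 1 ≤ C ∧ ∃ β : ℝ, 0 < β ∧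
      ∀ μ : ℝ, 0 < μ →
      ∀ h : ℝ → ℂ, ContinuousOn h (Ici 0) →
      ∀ v v' v'' : ℝ → ℂ,
        (∀ t ∈ Ici (0:ℝ), HasDerivWithinAt v (v' t) (Ici 0) t) →
        (∀ t ∈ Ici (0:ℝ), HasDerivWithinAt v' (v'' t) (Ici 0) t) →
        ContinuousOn v'' (Ici 0) →
        (∀ t ∈ Ici (0:ℝ),
          v'' t + v' t + ((μ^4 + α : ℝ) : ℂ) * v t + ((μ^2 : ℝ) : ℂ) * h t = 0) →
        ∀ t ∈ Ici (0:ℝ),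
          Real.sqrt ((μ^2)⁻¹ * ‖v' t‖^2 + μ^2 * ‖v t‖^2 + α * (μ^2)⁻¹ * ‖v t‖^2)
            ≤ C * Real.exp (-β * t) *
                Real.sqrt ((μ^2)⁻¹ * ‖v' 0‖^2 + μ^2 * ‖v 0‖^2 + α * (μ^2)⁻¹ * ‖v 0‖^2)
              + C * ∫ s in Ioc (0:ℝ) t, Real.exp (-β * (t - s)) * (μ * ‖h s‖) := by
  have hmin : 0 < min 1 α := lt_min one_pos hα
  refine ⟨4, by norm_num, min 1 α / 6, by positivity, ?_⟩
  intro μ hμ h hcont v v' v'' hv hv' hv''c hode t ht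
  set β : ℝ := min 1 α / 6 with hβdef
  set κ : ℝ := min 1 α / 2 with hκdef
  have hβκ : β = κ/3 := by rw [hβdef, hκdef]; ring
  have hκ0 : 0 < κ := by rw [hκdef]; positivity
  have hβ0 : 0 < β := by rw [hβdef]; positivity
  have hκ1 : κ ≤ 1/2 := by
    rw [hκdef]; have := min_le_left (1:ℝ) α; linarith
  set γ : ℝ := μ^4 + α with hγdef
  have hμ4 : 0 < μ^4 := by positivity
  have hγ0 : 0 < γ := by rw [hγdef]; positivity
  have hκγ : 2*κ ≤ γ := by
    rw [hκdef, hγdef]; have := min_le_right (1:ℝ) α; linarith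
  -- component functions
  set P : ℝ → ℝ := fun s => (v s).re with hPdef
  set Q : ℝ → ℝ := fun s => (v s).im with hQdef
  set P1 : ℝ → ℝ := fun s => (v' s).re with hP1def
  set Q1 : ℝ → ℝ := fun s => (v' s).im with hQ1def
  have hP : ∀ s ∈ Ici (0:ℝ), HasDerivWithinAt P (P1 s) (Ici 0) s :=
    fun s hs => Complex.reCLM.hasFDerivAt.comp_hasDerivWithinAt s (hv s hs)
  have hQ : ∀ s ∈ Ici (0:ℝ), HasDerivWithinAt Q (Q1 s) (Ici 0) s :=
    fun s hs => Complex.imCLM.hasFDerivAt.comp_hasDerivWithinAt s (hv s hs)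
  have hP1 : ∀ s ∈ Ici (0:ℝ), HasDerivWithinAt P1 ((v'' s).re) (Ici 0) s :=
    fun s hs => Complex.reCLM.hasFDerivAt.comp_hasDerivWithinAt s (hv' s hs)
  have hQ1 : ∀ s ∈ Ici (0:ℝ), HasDerivWithinAt Q1 ((v'' s).im) (Ici 0) s :=
    fun s hs => Complex.imCLM.hasFDerivAt.comp_hasDerivWithinAt s (hv' s hs)
  -- the ODE, componentwise
  have hode' : ∀ s ∈ Ici (0:ℝ), v'' s = -v' s - (γ:ℂ)*v s - ((μ^2:ℝ):ℂ)*h s := by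
    intro s hs
    have h0 := hode s hs
    linear_combination h0
  have hP2 : ∀ s ∈ Ici (0:ℝ), (v'' s).re = -P1 s - γ*P s - μ^2*(h s).re := by
    intro s hs
    rw [hode' s hs]
    simp [Complex.sub_re, Complex.neg_re, Complex.mul_re, pow_two, hP1def, hPdef]
  have hQ2 : ∀ s ∈ Ici (0:ℝ), (v'' s).im = -Q1 s - γ*Q s - μ^2*(h s).im := by
    intro s hs
    rw [hode' s hs]
    simp [Complex.sub_im, Complex.neg_im, Complex.mul_im, pow_two, hQ1def, hQdef]
  -- energy functionals
  set E : ℝ → ℝ := fun s => P1 s*P1 s + Q1 s*Q1 s + γ*(P s*P s + Q s*Q s) with hEdef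
  set Φ : ℝ → ℝ := fun s =>
    P1 s*P1 s + Q1 s*Q1 s + γ*(P s*P s + Q s*Q s) + 2*κ*(P s*P1 s + Q s*Q1 s) with hΦdef
  set D : ℝ → ℝ := fun s =>
    ((v'' s).re*P1 s + P1 s*(v'' s).re) + ((v'' s).im*Q1 s + Q1 s*(v'' s).im)
    + γ*((P1 s*P s + P s*P1 s) + (Q1 s*Q s + Q s*Q1 s))
    + 2*κ*((P1 s*P1 s + P s*(v'' s).re) + (Q1 s*Q1 s + Q s*(v'' s).im)) with hDdef
  have hΦd : ∀ s ∈ Ici (0:ℝ), HasDerivWithinAt Φ (D s) (Ici 0) s := by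
    intro s hs
    exact ((((hP1 s hs).mul (hP1 s hs)).add ((hQ1 s hs).mul (hQ1 s hs))).add
      ((((hP s hs).mul (hP s hs)).add ((hQ s hs).mul (hQ s hs))).const_mul γ)).add
      ((((hP s hs).mul (hP1 s hs)).add ((hQ s hs).mul (hQ1 s hs))).const_mul (2*κ))
  have hbd : ∀ s : ℝ, 0 ≤ E s ∧ E s / 2 ≤ Φ s ∧ Φ s ≤ (3/2) * E s :=
    fun s => phi_bd γ κ (P s) (Q s) (P1 s) (Q1 s) hγ0 hκ0 hκ1 hκγ
  have hΦc : ContinuousOn Φ (Ici 0) := fun s hs => (hΦd s hs).continuousWithinAt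
  -- the target N(t) in terms of E
  have hNE : ∀ s : ℝ, Real.sqrt ((μ^2)⁻¹ * ‖v' s‖^2 + μ^2 * ‖v s‖^2 + α * (μ^2)⁻¹ * ‖v s‖^2)
      = μ⁻¹ * Real.sqrt (E s) := by
    intro s
    have h1 : (μ^2)⁻¹ * ‖v' s‖^2 + μ^2 * ‖v s‖^2 + α * (μ^2)⁻¹ * ‖v s‖^2
        = (μ⁻¹)^2 * E s := by
      rw [norm_sq_complex (v' s), norm_sq_complex (v s), hEdef, hγdef]
      field_simp
      ring
    rw [h1, Real.sqrt_mul (by positivity), Real.sqrt_sq (by positivity)]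
  clear_value β κ γ P Q P1 Q1 E Φ D
  -- rewrite the goal in terms of E
  rw [hNE t, hNE 0, neg_mul]
  apply le_of_forall_pos_le_add
  intro δ hδ
  set ε : ℝ := (δ*μ/3)^2 with hεdef
  have hε0 : 0 < ε := by rw [hεdef]; positivity
  have hsqε : Real.sqrt ε = δ*μ/3 := by rw [hεdef, Real.sqrt_sq (by positivity)]
  set y : ℝ → ℝ := fun s => Real.sqrt (Φ s + ε) with hydef
  set g : ℝ → ℝ := fun s =>
    Real.exp (β*s) * ((5/2) * (μ^2 * ‖h s‖) + β * Real.sqrt ε) with hgdef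
  set F : ℝ → ℝ := fun s => Real.exp (β*s) * y s - ∫ u in (0:ℝ)..s, g u with hFdef
  have hyc : ContinuousOn y (Ici 0) :=
    Real.continuous_sqrt.comp_continuousOn (hΦc.add continuousOn_const)
  have hexpc : Continuous (fun s : ℝ => Real.exp (β*s)) :=
    Real.continuous_exp.comp (continuous_const.mul continuous_id)
  have hgc : ContinuousOn g (Ici 0) := by
    apply ContinuousOn.mul hexpc.continuousOn
    exact (continuousOn_const.mul (continuousOn_const.mul hcont.norm)).add continuousOn_const
  have hgci : ∀ b : ℝ, 0 ≤ b → IntervalIntegrable g MeasureTheory.volume 0 b := by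
    intro b hb
    apply ContinuousOn.intervalIntegrable
    rw [uIcc_of_le hb]
    exact hgc.mono Icc_subset_Ici_self
  clear_value y g F
  -- derivative of F on Ioi 0
  have hFd : ∀ x ∈ Ioi (0:ℝ), HasDerivAt F
      (Real.exp (β*x)*β * y x + Real.exp (β*x) * (D x / (2 * Real.sqrt (Φ x + ε))) - g x) x := by
    intro x hx
    rw [hFdef]
    have hx0 : (0:ℝ) ≤ x := le_of_lt hx
    have hmem : Ici (0:ℝ) ∈ 𝓝 x := Ici_mem_nhds hx
    have hΦx : HasDerivAt Φ (D x) x := (hΦd x hx0).hasDerivAt hmem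
    have hΦε : HasDerivAt (fun s => Φ s + ε) (D x) x := hΦx.add_const ε
    have hne : Φ x + ε ≠ 0 := by
      have h1 := (hbd x).1; have h2 := (hbd x).2.1
      have : 0 < Φ x + ε := by linarith
      exact this.ne'
    have hyx : HasDerivAt y (D x / (2 * Real.sqrt (Φ x + ε))) x := by
      rw [hydef]; exact hΦε.sqrt hne
    have hex : HasDerivAt (fun s : ℝ => Real.exp (β*s)) (Real.exp (β*x)*β) x := by
      have := (Real.hasDerivAt_exp (β*x)).comp x ((hasDerivAt_id x).const_mul β)
      simp only [mul_one] at this; exact this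
    have hca : ContinuousAt g x := hgc.continuousAt hmem
    have hmeas : StronglyMeasurableAtFilter g (𝓝 x) MeasureTheory.volume :=
      ContinuousOn.stronglyMeasurableAtFilter isOpen_Ioi (hgc.mono Ioi_subset_Ici_self) x hx
    have hint : HasDerivAt (fun s => ∫ u in (0:ℝ)..s, g u) (g x) x :=
      intervalIntegral.integral_hasDerivAt_right (hgci x hx0) hmeas hca
    exact (hex.mul hyx).sub hint
  -- the derivative is nonpositive
  have hFnp : ∀ x ∈ Ioi (0:ℝ), deriv F x ≤ 0 := by
    intro x hx
    have hx0 : (0:ℝ) ≤ x := le_of_lt hx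
    rw [(hFd x hx).deriv]
    have hΦnn : 0 ≤ Φ x := by have h1 := (hbd x).1; have h2 := (hbd x).2.1; linarith
    have hDx : D x = ((-P1 x-γ*P x-μ^2*(h x).re)*P1 x + P1 x*(-P1 x-γ*P x-μ^2*(h x).re))
        + ((-Q1 x-γ*Q x-μ^2*(h x).im)*Q1 x + Q1 x*(-Q1 x-γ*Q x-μ^2*(h x).im))
        + γ*((P1 x*P x + P x*P1 x) + (Q1 x*Q x + Q x*Q1 x))
        + 2*κ*((P1 x*P1 x + P x*(-P1 x-γ*P x-μ^2*(h x).re))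
            + (Q1 x*Q1 x + Q x*(-Q1 x-γ*Q x-μ^2*(h x).im))) := by
      simp only [hDdef]
      rw [hP2 x hx0, hQ2 x hx0]
    have hmeq : μ^2 * ‖h x‖ = Real.sqrt ((μ^2*(h x).re)^2 + (μ^2*(h x).im)^2) := by
      rw [show (μ^2*(h x).re)^2 + (μ^2*(h x).im)^2
          = (μ^2)^2 * ((h x).re*(h x).re + (h x).im*(h x).im) by ring,
        Real.sqrt_mul (by positivity), Real.sqrt_sq (by positivity), sqrt_normSq]
    have hDle : D x ≤ -(2*β) * Φ x + 5 * (μ^2*‖h x‖) * Real.sqrt (Φ x) := by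
      have hpt := ptwise γ κ (μ^2*‖h x‖) (P x) (Q x) (P1 x) (Q1 x)
        (μ^2*(h x).re) (μ^2*(h x).im) hγ0 hκ0 hκ1 hκγ hmeq
      rw [hDx, hβκ]
      simp only [hΦdef]
      convert hpt using 3 <;> ring
    set m := μ^2 * ‖h x‖ with hmdef
    have hm0 : 0 ≤ m := by positivity
    set S := Real.sqrt (Φ x + ε) with hSdef
    set s0 := Real.sqrt (Φ x) with hs0def
    have hS0 : 0 < S := Real.sqrt_pos.2 (by linarith)
    have hS2 : S^2 = Φ x + ε := Real.sq_sqrt (by linarith)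
    have hs02 : s0^2 = Φ x := Real.sq_sqrt hΦnn
    have hs0nn : 0 ≤ s0 := Real.sqrt_nonneg _
    have hs0S : s0 ≤ S := Real.sqrt_le_sqrt (by linarith)
    have hsεS : Real.sqrt ε ≤ S := Real.sqrt_le_sqrt (by linarith)
    have hsε2 : (Real.sqrt ε)^2 = ε := Real.sq_sqrt hε0.le
    have hεnn : 0 ≤ Real.sqrt ε := Real.sqrt_nonneg _
    have key : β*S + D x/(2*S) ≤ (5/2)*m + β*Real.sqrt ε := by
      have h2S : (0:ℝ) < 2*S := by linarith
      have hmul : D x ≤ ((5/2)*m + β*Real.sqrt ε - β*S) * (2*S) := by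
        nlinarith [hDle, mul_nonneg hm0 (sub_nonneg.2 hs0S),
          mul_nonneg hβ0.le (sub_nonneg.2 (mul_le_mul_of_nonneg_left hsεS hεnn))]
      have := (div_le_iff₀ h2S).mpr hmul
      linarith
    have hyx : y x = S := by simp only [hydef, hSdef]
    have hgx : g x = Real.exp (β*x) * ((5/2)*m + β*Real.sqrt ε) := by
      simp only [hgdef, hmdef]
    calc Real.exp (β*x)*β*y x + Real.exp (β*x)*(D x/(2*S)) - g x
        = Real.exp (β*x) * ((β*S + D x/(2*S)) - ((5/2)*m + β*Real.sqrt ε)) := by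
          rw [hgx, hyx]; ring
      _ ≤ Real.exp (β*x) * 0 :=
          mul_le_mul_of_nonneg_left (by linarith) (Real.exp_nonneg _)
      _ = 0 := mul_zero _
  -- F is antitone on [0, t]
  have hFanti : AntitoneOn F (Icc 0 t) := by
    apply antitoneOn_of_deriv_nonpos (convex_Icc 0 t)
    · rw [hFdef]
      apply ContinuousOn.sub
      · exact hexpc.continuousOn.mul (hyc.mono Icc_subset_Ici_self)
      · have hig : MeasureTheory.IntegrableOn g (uIcc 0 t) MeasureTheory.volume := by
          rw [uIcc_of_le ht]
          exact (hgc.mono Icc_subset_Ici_self).integrableOn_Icc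
        have := intervalIntegral.continuousOn_primitive_interval hig
        rwa [uIcc_of_le ht] at this
    · rw [interior_Icc]
      intro x hx
      exact ((hFd x hx.1).differentiableAt).differentiableWithinAt
    · rw [interior_Icc]
      intro x hx
      exact hFnp x hx.1
  have hFt : F t ≤ F 0 := hFanti (left_mem_Icc.2 ht) (right_mem_Icc.2 ht) ht
  have hF0 : F 0 = y 0 := by simp [hFdef]
  have hmain : Real.exp (β*t) * y t ≤ y 0 + ∫ u in (0:ℝ)..t, g u := by
    rw [hF0] at hFt
    simp only [hFdef] at hFt
    linarith
  have hyt : y t ≤ Real.exp (-(β*t)) * (y 0 + ∫ u in (0:ℝ)..t, g u) := by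
    have h2 := mul_le_mul_of_nonneg_left hmain (Real.exp_nonneg (-(β*t)))
    rw [← mul_assoc, ← Real.exp_add, show -(β*t)+β*t = 0 by ring, Real.exp_zero, one_mul] at h2
    exact h2
  -- integral computations
  have hIexp : ∫ u in (0:ℝ)..t, Real.exp (β*u) = (Real.exp (β*t) - 1)/β := by
    have hder : ∀ u ∈ uIcc (0:ℝ) t, HasDerivAt (fun w => Real.exp (β*w)/β) (Real.exp (β*u)) u := by
      intro u _
      have hd : HasDerivAt (fun w : ℝ => Real.exp (β*w)) (Real.exp (β*u)*β) u := by
        have := (Real.hasDerivAt_exp (β*u)).comp u ((hasDerivAt_id u).const_mul β)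
        simp only [mul_one] at this; exact this
      have h3 := hd.div_const β
      have h4 : Real.exp (β*u)*β/β = Real.exp (β*u) := by
        field_simp
      rwa [h4] at h3
    rw [intervalIntegral.integral_eq_sub_of_hasDerivAt hder (hexpc.intervalIntegrable 0 t)]
    rw [mul_zero, Real.exp_zero]
    ring
  set A := ∫ u in (0:ℝ)..t, Real.exp (β*u) * ‖h u‖ with hAdef
  have hgsplit : (∫ u in (0:ℝ)..t, g u)
      = (5/2)*μ^2 * A + β*Real.sqrt ε * ((Real.exp (β*t) - 1)/β) := by
    rw [← hIexp, hAdef]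
    have i1 : IntervalIntegrable (fun u => Real.exp (β*u) * ‖h u‖) MeasureTheory.volume 0 t := by
      apply ContinuousOn.intervalIntegrable
      rw [uIcc_of_le ht]
      exact (hexpc.continuousOn.mul hcont.norm).mono Icc_subset_Ici_self
    have i2 : IntervalIntegrable (fun u : ℝ => Real.exp (β*u)) MeasureTheory.volume 0 t :=
      hexpc.intervalIntegrable 0 t
    rw [show g = fun u => (5/2)*μ^2*(Real.exp (β*u)*‖h u‖) + β*Real.sqrt ε*(Real.exp (β*u)) by
      funext u; simp only [hgdef]; ring]
    rw [intervalIntegral.integral_add (i1.const_mul _) (i2.const_mul _),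
      intervalIntegral.integral_const_mul, intervalIntegral.integral_const_mul]
  set Jh := ∫ u in (0:ℝ)..t, Real.exp (-β*(t-u)) * ‖h u‖ with hJhdef
  have hJh : Real.exp (-(β*t)) * A = Jh := by
    rw [hJhdef, hAdef, ← intervalIntegral.integral_const_mul]
    apply intervalIntegral.integral_congr
    intro u _
    show Real.exp (-(β*t)) * (Real.exp (β*u) * ‖h u‖) = _
    rw [← mul_assoc, ← Real.exp_add, show -(β*t)+β*u = -β*(t-u) by ring]
  have hJhnn : 0 ≤ Jh := by
    rw [hJhdef]
    apply intervalIntegral.integral_nonneg ht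
    intro u _
    positivity
  have hIoc : (∫ s in Ioc (0:ℝ) t, Real.exp (-β * (t - s)) * (μ * ‖h s‖)) = μ * Jh := by
    rw [hJhdef, ← intervalIntegral.integral_const_mul, ← intervalIntegral.integral_of_le ht]
    apply intervalIntegral.integral_congr
    intro u _
    ring
  rw [hIoc]
  -- bound y 0 and √(E t)
  have hy0 : y 0 ≤ 1.5 * Real.sqrt (E 0) + Real.sqrt ε := by
    have hΦ0nn : 0 ≤ Φ 0 := by have h1 := (hbd 0).1; have h2 := (hbd 0).2.1; linarith
    have h1 : y 0 ≤ Real.sqrt (Φ 0) + Real.sqrt ε := by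
      simp only [hydef]
      exact sqrt_add_le' _ _ hΦ0nn hε0.le
    have h2 : Real.sqrt (Φ 0) ≤ 1.5*Real.sqrt (E 0) := by
      have h3 : Φ 0 ≤ 2 * E 0 := by linarith [(hbd 0).2.2, (hbd 0).1]
      calc Real.sqrt (Φ 0) ≤ Real.sqrt (2*E 0) := Real.sqrt_le_sqrt h3
      _ = Real.sqrt 2 * Real.sqrt (E 0) := Real.sqrt_mul (by norm_num) _
      _ ≤ 1.5*Real.sqrt (E 0) := mul_le_mul_of_nonneg_right sqrt2_le (Real.sqrt_nonneg _)
    linarith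
  have hEt : Real.sqrt (E t) ≤ 1.5 * y t := by
    have h1 : E t ≤ 2*(Φ t + ε) := by linarith [(hbd t).2.1, hε0.le]
    have hytnn : 0 ≤ y t := by rw [hydef]; exact Real.sqrt_nonneg _
    calc Real.sqrt (E t) ≤ Real.sqrt (2*(Φ t+ε)) := Real.sqrt_le_sqrt h1
    _ = Real.sqrt 2 * y t := by simp only [hydef]; rw [Real.sqrt_mul (by norm_num)]
    _ ≤ 1.5 * y t := mul_le_mul_of_nonneg_right sqrt2_le hytnn
  -- the exp(-βt) * ε-term is small
  have hterm : Real.exp (-(β*t)) * (β*Real.sqrt ε*((Real.exp (β*t) - 1)/β)) ≤ Real.sqrt ε := by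
    have h3 : β*Real.sqrt ε*((Real.exp (β*t)-1)/β) = Real.sqrt ε*(Real.exp (β*t)-1) := by
      field_simp
    rw [h3]
    have hee : Real.exp (-(β*t)) * Real.exp (β*t) = 1 := by
      rw [← Real.exp_add]; simp
    have h4 : Real.exp (-(β*t)) * (Real.sqrt ε*(Real.exp (β*t)-1))
        = Real.sqrt ε * (1 - Real.exp (-(β*t))) := by
      linear_combination Real.sqrt ε * hee
    rw [h4]
    nlinarith [Real.sqrt_nonneg ε, Real.exp_nonneg (-(β*t))]
  -- assemble
  have hμinv : (0:ℝ) ≤ μ⁻¹ := by positivity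
  have hA2 : y t ≤ Real.exp (-(β*t))*(1.5*Real.sqrt (E 0) + Real.sqrt ε)
      + ((5/2)*μ^2*Jh + Real.sqrt ε) := by
    have hs1 : Real.exp (-(β*t)) * (y 0 + ∫ u in (0:ℝ)..t, g u)
        = Real.exp (-(β*t)) * y 0 + Real.exp (-(β*t)) * ∫ u in (0:ℝ)..t, g u := by ring
    have hs2 : Real.exp (-(β*t)) * (∫ u in (0:ℝ)..t, g u)
        = (5/2)*μ^2*(Real.exp (-(β*t))*A)
          + Real.exp (-(β*t)) * (β*Real.sqrt ε*((Real.exp (β*t) - 1)/β)) := by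
      rw [hgsplit]; ring
    rw [hJh] at hs2
    have hs3 : Real.exp (-(β*t)) * y 0 ≤ Real.exp (-(β*t))*(1.5*Real.sqrt (E 0) + Real.sqrt ε) :=
      mul_le_mul_of_nonneg_left hy0 (Real.exp_nonneg _)
    calc y t ≤ Real.exp (-(β*t)) * (y 0 + ∫ u in (0:ℝ)..t, g u) := hyt
    _ = Real.exp (-(β*t)) * y 0 + Real.exp (-(β*t)) * ∫ u in (0:ℝ)..t, g u := hs1
    _ ≤ Real.exp (-(β*t))*(1.5*Real.sqrt (E 0) + Real.sqrt ε)
        + ((5/2)*μ^2*Jh + Real.sqrt ε) := by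
          rw [hs2]
          have := add_le_add hs3 (add_le_add_left hterm ((5:ℝ)/2*μ^2*Jh))
          linarith
  have hμ2 : μ⁻¹*μ^2 = μ := by field_simp
  have hμδ : μ⁻¹*Real.sqrt ε = δ/3 := by
    rw [hsqε]; field_simp
  have hexple : Real.exp (-(β*t)) ≤ 1 := by
    apply Real.exp_le_one_iff.mpr
    simp only [mem_Ici] at ht
    nlinarith
  have hE0nn : 0 ≤ Real.sqrt (E 0) := Real.sqrt_nonneg _
  have hexpnn : 0 ≤ Real.exp (-(β*t)) := Real.exp_nonneg _
  calc μ⁻¹ * Real.sqrt (E t) ≤ μ⁻¹ * (1.5 * y t) :=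
        mul_le_mul_of_nonneg_left hEt hμinv
  _ ≤ μ⁻¹ * (1.5 * (Real.exp (-(β*t))*(1.5*Real.sqrt (E 0) + Real.sqrt ε)
        + ((5/2)*μ^2*Jh + Real.sqrt ε))) := by
      apply mul_le_mul_of_nonneg_left _ hμinv
      linarith
  _ = 2.25*(Real.exp (-(β*t))*(μ⁻¹*Real.sqrt (E 0)))
        + 1.5*(μ⁻¹*Real.sqrt ε)*Real.exp (-(β*t)) + 3.75*(μ*Jh) + 1.5*(μ⁻¹*Real.sqrt ε) := by
      have : μ⁻¹*((5:ℝ)/2*μ^2*Jh) = (5/2)*(μ*Jh) := by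
        rw [show μ⁻¹*((5:ℝ)/2*μ^2*Jh) = (5:ℝ)/2*(μ⁻¹*μ^2)*Jh by ring, hμ2]; ring
      nlinarith [this]
  _ ≤ 4 * Real.exp (-(β*t)) * (μ⁻¹*Real.sqrt (E 0)) + 4*(μ*Jh) + δ := by
      rw [hμδ]
      have hJμ : 0 ≤ μ*Jh := mul_nonneg hμ.le hJhnn
      nlinarith [mul_nonneg hexpnn (mul_nonneg hμinv hE0nn), hδ.le,
        mul_nonneg (sub_nonneg.2 hexple) hδ.le]
end

section
/- Let γ > 0, C > 0, M > 0 and T > 0, and let Y : [0,T] → [0,∞) be continuous with Y(0) ≤ M and Y(τ) ≤ M + C τ^γ (1 + Y(τ)⁴) Y(τ) for all τ ∈ [0,T]. Then there exists τ₀ > 0, depending only on γ, C and M (and not on T or Y), such that Y(τ) ≤ 2M for all τ ∈ [0, min(τ₀, T)]. -/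
open Set

/-- Continuation (bootstrap) lemma: if a continuous nonnegative function `Y` on `[0,T]`
satisfies `Y(0) ≤ M` and `Y(τ) ≤ M + Cτ^γ(1+Y(τ)⁴)Y(τ)`, then `Y ≤ 2M` on
`[0, min(τ₀,T)]` for some `τ₀ > 0` depending only on `γ`, `C` and `M`. -/
theorem bootstrap_lemma (γ C M : ℝ) (hγ : 0 < γ) (hC : 0 < C) (hM : 0 < M) :
    ∃ τ₀ : ℝ, 0 < τ₀ ∧
      ∀ T : ℝ, 0 < T → ∀ Y : ℝ → ℝ,
        ContinuousOn Y (Icc 0 T) →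
        (∀ τ ∈ Icc (0:ℝ) T, 0 ≤ Y τ) →
        Y 0 ≤ M →
        (∀ τ ∈ Icc (0:ℝ) T, Y τ ≤ M + C * τ ^ γ * (1 + Y τ ^ 4) * Y τ) →
        ∀ τ ∈ Icc (0:ℝ) (min τ₀ T), Y τ ≤ 2 * M := by
  set B : ℝ := 2 * C * (1 + (2*M)^4) * (2*M) with hB
  have hBpos : 0 < B := by positivity
  refine ⟨(M / B) ^ (1/γ), by positivity, ?_⟩
  intro T hT Y hcont hpos hY0 hbound τ hτ
  by_contra hlt
  push_neg at hlt
  obtain ⟨hτ0, hτm⟩ := hτ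
  have hτT : τ ≤ T := hτm.trans (min_le_right _ _)
  have hτ₀ : τ ≤ (M/B)^(1/γ) := hτm.trans (min_le_left _ _)
  have hsub : Icc (0:ℝ) τ ⊆ Icc 0 T := Icc_subset_Icc le_rfl hτT
  have hivt := intermediate_value_Icc hτ0 (hcont.mono hsub)
  have h7 : (7/4 : ℝ) * M ∈ Icc (Y 0) (Y τ) := ⟨by nlinarith, by nlinarith⟩
  obtain ⟨s, hs, hYs⟩ := hivt h7
  have hsT : s ∈ Icc (0:ℝ) T := hsub hs
  have hb := hbound s hsT
  have hs₀ : s ≤ (M/B)^(1/γ) := hs.2.trans hτ₀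
  have hsγ : s ^ γ ≤ M / B := by
    calc s ^ γ ≤ ((M/B)^(1/γ)) ^ γ := Real.rpow_le_rpow hs.1 hs₀ hγ.le
    _ = M / B := by
        rw [← Real.rpow_mul (by positivity), one_div_mul_cancel hγ.ne', Real.rpow_one]
  have hsγ0 : 0 ≤ s ^ γ := Real.rpow_nonneg hs.1 γ
  rw [hYs] at hb
  have key : C * s ^ γ * (1 + (7/4*M)^4) * (7/4*M) ≤ C * (M/B) * (1 + (2*M)^4) * (2*M) := by
    have h1 : (1 + (7/4*M)^4) * (7/4*M) ≤ (1 + (2*M)^4) * (2*M) := by nlinarith [pow_pos hM 5, pow_pos hM 4, hM]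
    have h2 : C * s ^ γ ≤ C * (M/B) := by
      exact mul_le_mul_of_nonneg_left hsγ hC.le
    have h3 : 0 ≤ (1 + (7/4*M)^4) * (7/4*M) := by positivity
    calc C * s ^ γ * (1 + (7/4*M)^4) * (7/4*M)
        = (C * s ^ γ) * ((1 + (7/4*M)^4) * (7/4*M)) := by ring
      _ ≤ (C * (M/B)) * ((1 + (2*M)^4) * (2*M)) := by
          apply mul_le_mul h2 h1 h3 (by positivity)
      _ = C * (M/B) * (1 + (2*M)^4) * (2*M) := by ring
  have hhalf : C * (M/B) * (1 + (2*M)^4) * (2*M) = M / 2 := by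
    rw [hB]; field_simp
  nlinarith [key, hb, hhalf]
end

section
/- Let β > 0, T > 0, let E : [0,T] → [0,∞) be continuously differentiable and K : [0,T] → [0,∞) be continuous, and suppose E'(t) + β E(t) ≤ K(t) √(E(t)) for all t ∈ [0,T]. Then for all t ∈ [0,T]: √(E(t)) ≤ e^{−βt/2} √(E(0)) + ½ ∫₀ᵗ e^{−β(t−s)/2} K(s) ds. -/
open Set

lemma sqrt_gronwall_aux (β T ε : ℝ) (hβ : 0 < β) (hT : 0 < T) (hε : 0 < ε)
    (E E' K : ℝ → ℝ)
    (hE : ∀ t ∈ Icc (0:ℝ) T, HasDerivWithinAt E (E' t) (Icc 0 T) t)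
    (hEnn : ∀ t ∈ Icc (0:ℝ) T, 0 ≤ E t)
    (hE'cont : ContinuousOn E' (Icc 0 T))
    (hKcont : ContinuousOn K (Icc 0 T))
    (hKnn : ∀ t ∈ Icc (0:ℝ) T, 0 ≤ K t)
    (hineq : ∀ t ∈ Icc (0:ℝ) T, E' t + β * E t ≤ K t * Real.sqrt (E t)) :
    ∀ t ∈ Icc (0:ℝ) T,
      Real.sqrt (E t + ε^2) ≤ Real.exp (-β * t / 2) * Real.sqrt (E 0 + ε^2)
        + ∫ s in (0:ℝ)..t, Real.exp (-β * (t - s) / 2) * ((K s + β * ε) / 2) := by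
  set f : ℝ → ℝ := fun t => Real.sqrt (E t + ε^2) with hf_def
  have hpos : ∀ t ∈ Icc (0:ℝ) T, 0 < E t + ε^2 := fun t ht => by
    have := hEnn t ht; positivity
  have hfpos : ∀ t ∈ Icc (0:ℝ) T, 0 < f t := fun t ht =>
    Real.sqrt_pos.mpr (hpos t ht)
  set f' : ℝ → ℝ := fun t => 1 / (2 * f t) * E' t with hf'_def
  have hf : ∀ t ∈ Icc (0:ℝ) T, HasDerivWithinAt f (f' t) (Icc 0 T) t := by
    intro t ht
    have h1 : HasDerivWithinAt (fun s => E s + ε^2) (E' t) (Icc 0 T) t :=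
      (hE t ht).add_const _
    have h2 := (Real.hasDerivAt_sqrt (ne_of_gt (hpos t ht))).comp_hasDerivWithinAt t h1
    exact h2
  have hEcont : ContinuousOn E (Icc 0 T) := fun t ht => (hE t ht).continuousWithinAt
  have hfcont : ContinuousOn f (Icc 0 T) := (hEcont.add continuousOn_const).sqrt
  set g : ℝ → ℝ := fun t => Real.exp (β * t / 2) * f t with hg_def
  set g' : ℝ → ℝ := fun t => Real.exp (β * t / 2) * (β / 2) * f t
      + Real.exp (β * t / 2) * f' t with hg'_def
  have hexp : ∀ t : ℝ, HasDerivAt (fun s => Real.exp (β * s / 2))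
      (Real.exp (β * t / 2) * (β / 2)) t := by
    intro t
    have h1 : HasDerivAt (fun s : ℝ => β * s / 2) (β / 2) t := by
      simpa using (((hasDerivAt_id t).const_mul β).div_const 2)
    exact h1.exp
  have hg : ∀ t ∈ Icc (0:ℝ) T, HasDerivWithinAt g (g' t) (Icc 0 T) t := by
    intro t ht
    exact ((hexp t).hasDerivWithinAt).mul (hf t ht)
  have hbound : ∀ s ∈ Icc (0:ℝ) T,
      g' s ≤ Real.exp (β * s / 2) * ((K s + β * ε) / 2) := by
    intro s hs
    have hfs := hfpos s hs
    have hfsq : f s ^ 2 = E s + ε ^ 2 := Real.sq_sqrt (hpos s hs).le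
    have hEle : Real.sqrt (E s) ≤ f s := by
      apply Real.sqrt_le_sqrt; nlinarith
    have hεle : ε ≤ f s := by
      have : Real.sqrt (ε ^ 2) ≤ f s := by
        apply Real.sqrt_le_sqrt; have := hEnn s hs; nlinarith
      rwa [Real.sqrt_sq hε.le] at this
    have hKs := hKnn s hs
    have hin := hineq s hs
    have key : β / 2 * f s + 1 / (2 * f s) * E' s ≤ (K s + β * ε) / 2 := by
      have heq : β / 2 * f s + 1 / (2 * f s) * E' s
          = (β * f s ^ 2 + E' s) / (2 * f s) := by
        field_simp
      rw [heq, div_le_iff₀ (by positivity)]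
      have hsqE := Real.sqrt_nonneg (E s)
      have hA : K s * Real.sqrt (E s) ≤ K s * f s := mul_le_mul_of_nonneg_left hEle hKs
      have hB : β * ε * ε ≤ β * ε * f s :=
        mul_le_mul_of_nonneg_left hεle (by positivity)
      nlinarith [hA, hB]
    calc g' s = Real.exp (β * s / 2) * (β / 2 * f s + 1 / (2 * f s) * E' s) := by
          simp only [hg'_def, hf'_def]; ring
      _ ≤ Real.exp (β * s / 2) * ((K s + β * ε) / 2) :=
          mul_le_mul_of_nonneg_left key (Real.exp_pos _).le
  have hexpcont : ContinuousOn (fun s => Real.exp (β * s / 2)) (Icc (0:ℝ) T) :=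
    (Real.continuous_exp.comp ((continuous_const.mul continuous_id).div_const 2)).continuousOn
  have hf'cont : ContinuousOn f' (Icc 0 T) := by
    apply ContinuousOn.mul _ hE'cont
    exact continuousOn_const.div (continuousOn_const.mul hfcont)
      (fun s hs => by have := hfpos s hs; positivity)
  have hg'cont : ContinuousOn g' (Icc 0 T) :=
    ((hexpcont.mul continuousOn_const).mul hfcont).add (hexpcont.mul hf'cont)
  have hgcont : ContinuousOn g (Icc 0 T) := hexpcont.mul hfcont
  intro t ht
  have hsub : Icc (0:ℝ) t ⊆ Icc 0 T := Icc_subset_Icc le_rfl ht.2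
  have huIcc : uIcc (0:ℝ) t = Icc 0 t := uIcc_of_le ht.1
  have hintg' : IntervalIntegrable g' MeasureTheory.volume 0 t := by
    apply ContinuousOn.intervalIntegrable
    rw [huIcc]
    exact hg'cont.mono hsub
  have hintb : IntervalIntegrable (fun s => Real.exp (β * s / 2) * ((K s + β * ε) / 2))
      MeasureTheory.volume 0 t := by
    apply ContinuousOn.intervalIntegrable
    rw [huIcc]
    exact (hexpcont.mono hsub).mul
      (((hKcont.mono hsub).add continuousOn_const).div_const 2)
  have hftc : ∫ s in (0:ℝ)..t, g' s = g t - g 0 := by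
    apply intervalIntegral.integral_eq_sub_of_hasDeriv_right_of_le ht.1
      (hgcont.mono hsub) _ hintg'
    intro x hx
    have hxmem : x ∈ Icc (0:ℝ) T := ⟨hx.1.le, hx.2.le.trans ht.2⟩
    have hnhds : Icc (0:ℝ) T ∈ nhds x :=
      Icc_mem_nhds hx.1 (lt_of_lt_of_le hx.2 ht.2)
    exact ((hg x hxmem).hasDerivAt hnhds).hasDerivWithinAt
  have hmono : ∫ s in (0:ℝ)..t, g' s
      ≤ ∫ s in (0:ℝ)..t, Real.exp (β * s / 2) * ((K s + β * ε) / 2) :=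
    intervalIntegral.integral_mono_on ht.1 hintg' hintb
      (fun x hx => hbound x (hsub hx))
  have hg0 : g 0 = f 0 := by simp [hg_def]
  have hgt : g t ≤ f 0 + ∫ s in (0:ℝ)..t, Real.exp (β * s / 2) * ((K s + β * ε) / 2) := by
    rw [← hg0]; linarith [hftc, hmono]
  have hmul := mul_le_mul_of_nonneg_left hgt (Real.exp_pos (-β * t / 2)).le
  have hleft : Real.exp (-β * t / 2) * g t = f t := by
    simp only [hg_def]
    rw [← mul_assoc, ← Real.exp_add]
    have harg : -β * t / 2 + β * t / 2 = 0 := by ring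
    rw [harg, Real.exp_zero, one_mul]
  rw [hleft] at hmul
  have hright : Real.exp (-β * t / 2) *
      (f 0 + ∫ s in (0:ℝ)..t, Real.exp (β * s / 2) * ((K s + β * ε) / 2))
      = Real.exp (-β * t / 2) * f 0
        + ∫ s in (0:ℝ)..t, Real.exp (-β * (t - s) / 2) * ((K s + β * ε) / 2) := by
    rw [mul_add]
    congr 1
    rw [← intervalIntegral.integral_const_mul]
    apply intervalIntegral.integral_congr
    intro s hs
    have harg2 : -β * t / 2 + β * s / 2 = -β * (t - s) / 2 := by ring
    simp only [← mul_assoc, ← Real.exp_add, harg2]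
  rw [hright] at hmul
  exact hmul

/-- Gronwall-type inequality: if `E' + βE ≤ K√E` on `[0,T]` with `E ≥ 0`, `K ≥ 0`,
then `√E(t) ≤ e^{-βt/2}√E(0) + ½∫₀ᵗ e^{-β(t-s)/2} K(s) ds`. -/
theorem sqrt_gronwall (β T : ℝ) (hβ : 0 < β) (hT : 0 < T)
    (E E' K : ℝ → ℝ)
    (hE : ∀ t ∈ Icc (0:ℝ) T, HasDerivWithinAt E (E' t) (Icc 0 T) t)
    (hE'cont : ContinuousOn E' (Icc 0 T))
    (hEnn : ∀ t ∈ Icc (0:ℝ) T, 0 ≤ E t)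
    (hKcont : ContinuousOn K (Icc 0 T))
    (hKnn : ∀ t ∈ Icc (0:ℝ) T, 0 ≤ K t)
    (hineq : ∀ t ∈ Icc (0:ℝ) T, E' t + β * E t ≤ K t * Real.sqrt (E t)) :
    ∀ t ∈ Icc (0:ℝ) T,
      Real.sqrt (E t) ≤ Real.exp (-β * t / 2) * Real.sqrt (E 0)
        + (1/2) * ∫ s in (0:ℝ)..t, Real.exp (-β * (t - s) / 2) * K s := by
  intro t ht
  apply le_of_forall_pos_le_add
  intro δ hδ
  set c : ℝ := 1 + β * T / 2 with hc_def
  have hc : 0 < c := by positivity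
  set ε : ℝ := δ / c with hε_def
  have hε : 0 < ε := div_pos hδ hc
  have step := sqrt_gronwall_aux β T ε hβ hT hε E E' K hE hEnn hE'cont hKcont hKnn hineq t ht
  have h0T : (0:ℝ) ∈ Icc (0:ℝ) T := ⟨le_rfl, hT.le⟩
  -- √(E t) ≤ √(E t + ε²)
  have h1 : Real.sqrt (E t) ≤ Real.sqrt (E t + ε^2) := by
    apply Real.sqrt_le_sqrt; nlinarith
  -- √(E 0 + ε²) ≤ √(E 0) + ε
  have h2 : Real.sqrt (E 0 + ε^2) ≤ Real.sqrt (E 0) + ε := by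
    have hE0 := hEnn 0 h0T
    have hsq : E 0 + ε^2 ≤ (Real.sqrt (E 0) + ε)^2 := by
      nlinarith [Real.sq_sqrt hE0, Real.sqrt_nonneg (E 0)]
    calc Real.sqrt (E 0 + ε^2) ≤ Real.sqrt ((Real.sqrt (E 0) + ε)^2) :=
          Real.sqrt_le_sqrt hsq
      _ = Real.sqrt (E 0) + ε := Real.sqrt_sq (by positivity)
  have hsub : Icc (0:ℝ) t ⊆ Icc 0 T := Icc_subset_Icc le_rfl ht.2
  have huIcc : uIcc (0:ℝ) t = Icc 0 t := uIcc_of_le ht.1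
  have hexpcont : ContinuousOn (fun s => Real.exp (-β * (t - s) / 2)) (Icc (0:ℝ) t) :=
    (Real.continuous_exp.comp ((continuous_const.mul
      (continuous_const.sub continuous_id)).div_const 2)).continuousOn
  have hint1 : IntervalIntegrable (fun s => (1/2) * (Real.exp (-β * (t - s) / 2) * K s))
      MeasureTheory.volume 0 t := by
    apply ContinuousOn.intervalIntegrable
    rw [huIcc]
    exact continuousOn_const.mul (hexpcont.mul (hKcont.mono hsub))
  have hint2 : IntervalIntegrable (fun s => Real.exp (-β * (t - s) / 2) * (β * ε / 2))
      MeasureTheory.volume 0 t := by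
    apply ContinuousOn.intervalIntegrable
    rw [huIcc]
    exact hexpcont.mul continuousOn_const
  -- split the integral
  have hsplit : (∫ s in (0:ℝ)..t, Real.exp (-β * (t - s) / 2) * ((K s + β * ε) / 2))
      = (∫ s in (0:ℝ)..t, (1/2) * (Real.exp (-β * (t - s) / 2) * K s))
        + ∫ s in (0:ℝ)..t, Real.exp (-β * (t - s) / 2) * (β * ε / 2) := by
    rw [← intervalIntegral.integral_add hint1 hint2]
    apply intervalIntegral.integral_congr
    intro s hs
    ring
  have hfirst : (∫ s in (0:ℝ)..t, (1/2) * (Real.exp (-β * (t - s) / 2) * K s))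
      = (1/2) * ∫ s in (0:ℝ)..t, Real.exp (-β * (t - s) / 2) * K s :=
    intervalIntegral.integral_const_mul _ _
  have hsecond : (∫ s in (0:ℝ)..t, Real.exp (-β * (t - s) / 2) * (β * ε / 2))
      ≤ β * ε / 2 * T := by
    have hb : (∫ s in (0:ℝ)..t, Real.exp (-β * (t - s) / 2) * (β * ε / 2))
        ≤ ∫ _s in (0:ℝ)..t, β * ε / 2 := by
      apply intervalIntegral.integral_mono_on ht.1 hint2
        (intervalIntegrable_const)
      intro x hx
      have hexple : Real.exp (-β * (t - x) / 2) ≤ 1 := by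
        apply Real.exp_le_one_iff.mpr
        nlinarith [hx.1, hx.2]
      exact mul_le_of_le_one_left (by positivity) hexple
    have : (∫ _s in (0:ℝ)..t, β * ε / 2) = t * (β * ε / 2) := by
      simp [intervalIntegral.integral_const]; ring
    rw [this] at hb
    have : t * (β * ε / 2) ≤ T * (β * ε / 2) := by
      apply mul_le_mul_of_nonneg_right ht.2 (by positivity)
    linarith
  have hexpt : Real.exp (-β * t / 2) ≤ 1 := by
    apply Real.exp_le_one_iff.mpr
    nlinarith [ht.1]
  have hεc : ε * c = δ := div_mul_cancel₀ δ (ne_of_gt hc)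
  have hexppos := (Real.exp_pos (-β * t / 2)).le
  calc Real.sqrt (E t) ≤ Real.sqrt (E t + ε^2) := h1
    _ ≤ Real.exp (-β * t / 2) * Real.sqrt (E 0 + ε^2)
        + ∫ s in (0:ℝ)..t, Real.exp (-β * (t - s) / 2) * ((K s + β * ε) / 2) := step
    _ ≤ Real.exp (-β * t / 2) * (Real.sqrt (E 0) + ε)
        + ((1/2) * (∫ s in (0:ℝ)..t, Real.exp (-β * (t - s) / 2) * K s) + β * ε / 2 * T) := by
        rw [hsplit, hfirst]
        gcongr
    _ ≤ Real.exp (-β * t / 2) * Real.sqrt (E 0)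
        + (1/2) * (∫ s in (0:ℝ)..t, Real.exp (-β * (t - s) / 2) * K s) + δ := by
        have h3 : Real.exp (-β * t / 2) * ε ≤ ε :=
          mul_le_of_le_one_left hε.le hexpt
        have h4 : Real.exp (-β * t / 2) * (Real.sqrt (E 0) + ε)
            = Real.exp (-β * t / 2) * Real.sqrt (E 0) + Real.exp (-β * t / 2) * ε := by ring
        have h5 : ε + β * ε / 2 * T = ε * c := by rw [hc_def]; ring
        clear_value ε c
        linarith [h3, h4, h5, hεc]
end

section
/- Let κ ∈ (0,3] and C₀ > 0, and let f ∈ C¹(ℝ;ℝ) satisfy |f'(s)| ≤ C₀(1+|s|^{4−κ}) for all s ∈ ℝ. Then there exists a constant C₁ > 0, depending only on C₀ and κ, such that for every τ ∈ (0,1] and every continuous curve u : [0,τ] → 𝒮(ℝ³;ℝ): ∫₀^τ ‖∇(f ∘ u(t))‖_{L²(ℝ³)} dt ≤ C₁ τ^{κ/4} ( 1 + ∫₀^τ (sup_{x∈ℝ³} |u(t,x)|)⁴ dt ) · sup_{t∈[0,τ]} ‖∇u(t)‖_{L²(ℝ³)}, where (f ∘ u(t))(x) := f(u(t,x)) and ∇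 is the spatial gradient. -/
open MeasureTheory Real Set SchwartzMap

noncomputable section

abbrev E3 : Type := EuclideanSpace ℝ (Fin 3)

namespace CompAux

def P : ℕ := (volume : Measure E3).integrablePower

def c₀ : ℝ := 2 ^ P * ∫ x : E3, (1 + ‖x‖) ^ (-(P : ℝ))

variable {F : Type*} [NormedAddCommGroup F] [NormedSpace ℝ F]

lemma integral_norm_le (g : 𝓢(E3, F)) :
    ∫ x : E3, ‖g x‖ ≤ c₀ * (SchwartzMap.seminorm ℝ 0 0 g + SchwartzMap.seminorm ℝ P 0 g) := by
  have h := integral_pow_mul_iteratedFDeriv_le ℝ (volume : Measure E3) g 0 0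
  simp only [pow_zero, one_mul, norm_iteratedFDeriv_zero, zero_add] at h
  calc ∫ x : E3, ‖g x‖ ≤ _ := h
    _ = c₀ * (SchwartzMap.seminorm ℝ 0 0 g + SchwartzMap.seminorm ℝ P 0 g) := rfl

lemma integrable_norm_sq (g : 𝓢(E3, F)) :
    Integrable (fun x : E3 => ‖g x‖ ^ 2) := by
  apply Integrable.mono' (g.integrable.norm.const_mul (SchwartzMap.seminorm ℝ 0 0 g))
  · exact (g.continuous.norm.pow 2).aestronglyMeasurable
  · filter_upwards with x
    rw [Real.norm_eq_abs, abs_of_nonneg (by positivity), sq]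
    exact mul_le_mul_of_nonneg_right (norm_le_seminorm ℝ g x) (norm_nonneg _)

lemma integral_norm_sq_le (g : 𝓢(E3, F)) :
    ∫ x : E3, ‖g x‖ ^ 2 ≤ SchwartzMap.seminorm ℝ 0 0 g *
      (c₀ * (SchwartzMap.seminorm ℝ 0 0 g + SchwartzMap.seminorm ℝ P 0 g)) := by
  calc ∫ x : E3, ‖g x‖ ^ 2 ≤ ∫ x : E3, SchwartzMap.seminorm ℝ 0 0 g * ‖g x‖ := by
        apply integral_mono (integrable_norm_sq g) (g.integrable.norm.const_mul _)
        intro x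
        simp only [sq]
        exact mul_le_mul_of_nonneg_right (norm_le_seminorm ℝ g x) (norm_nonneg _)
    _ = SchwartzMap.seminorm ℝ 0 0 g * ∫ x : E3, ‖g x‖ := integral_const_mul _ _
    _ ≤ _ := mul_le_mul_of_nonneg_left (integral_norm_le g) (apply_nonneg _ _)

lemma young_aux {κ τ m : ℝ} (hκ : 0 < κ) (hκ' : κ ≤ 3) (hτ : 0 < τ) (hm : 0 ≤ m) :
    m ^ (4 - κ) ≤ τ ^ (κ/4) * m ^ (4:ℕ) + τ ^ ((κ - 4)/4) := by
  have h4κ : (0:ℝ) ≤ 4 - κ := by linarith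
  rcases le_or_gt m (τ ^ (-(1:ℝ)/4)) with h | h
  · have h1 : m ^ (4 - κ) ≤ (τ ^ (-(1:ℝ)/4)) ^ (4 - κ) :=
      Real.rpow_le_rpow hm h h4κ
    have h2 : (τ ^ (-(1:ℝ)/4)) ^ (4 - κ) = τ ^ ((κ - 4)/4) := by
      rw [← Real.rpow_mul hτ.le]; ring_nf
    have hpos : 0 ≤ τ ^ (κ/4) * m ^ (4:ℕ) := by positivity
    nlinarith [h1, h2]
  · have hm' : 0 < m := lt_of_le_of_lt (Real.rpow_nonneg hτ.le _) h
    have hmκ : τ ^ (-(κ/4)) ≤ m ^ κ := by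
      have := Real.rpow_le_rpow (Real.rpow_nonneg hτ.le _) h.le hκ.le
      rwa [← Real.rpow_mul hτ.le, show -(1:ℝ)/4 * κ = -(κ/4) by ring] at this
    have hsplit : (m:ℝ) ^ (4:ℕ) = m ^ (4 - κ) * m ^ κ := by
      rw [← Real.rpow_add hm', ← Real.rpow_natCast m 4]
      norm_num
    have key : m ^ (4 - κ) ≤ τ ^ (κ/4) * m ^ (4:ℕ) := by
      rw [hsplit, ← mul_assoc]
      calc m ^ (4 - κ) = (τ ^ (κ/4) * τ ^ (-(κ/4))) * m ^ (4 - κ) := by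
            rw [← Real.rpow_add hτ, add_neg_cancel, Real.rpow_zero, one_mul]
        _ ≤ (τ ^ (κ/4) * m ^ κ) * m ^ (4 - κ) := by
            apply mul_le_mul_of_nonneg_right _ (Real.rpow_nonneg hm _)
            · exact mul_le_mul_of_nonneg_left hmκ (Real.rpow_nonneg hτ.le _)
        _ = τ ^ (κ/4) * m ^ (4 - κ) * m ^ κ := by ring
    have : 0 ≤ τ ^ ((κ - 4)/4) := Real.rpow_nonneg hτ.le _
    linarith

lemma norm_fderiv_le_abs_deriv (f : ℝ → ℝ) (s : ℝ) : ‖fderiv ℝ f s‖ ≤ |deriv f s| := by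
  apply ContinuousLinearMap.opNorm_le_bound _ (abs_nonneg _)
  intro y
  have h : fderiv ℝ f s y = y • (fderiv ℝ f s 1) := by
    rw [← ContinuousLinearMap.map_smul, smul_eq_mul, mul_one]
  rw [h, deriv]
  simp [abs_mul, mul_comm]

lemma pertime {f : ℝ → ℝ} (hf : ContDiff ℝ 1 f) {C₀ κ : ℝ} (hC₀ : 0 < C₀) (hκ4 : 0 ≤ 4 - κ)
    (hgrowth : ∀ s, |deriv f s| ≤ C₀ * (1 + |s| ^ (4 - κ)))
    (g : 𝓢(E3, ℝ)) {M : ℝ} (hM : ∀ x, |g x| ≤ M) :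
    (∫ x : E3, ‖fderiv ℝ (fun y => f (g y)) x‖ ^ 2) ^ ((1:ℝ)/2)
      ≤ (C₀ * (1 + M ^ (4 - κ))) * (∫ x : E3, ‖fderiv ℝ (⇑g) x‖ ^ 2) ^ ((1:ℝ)/2) := by
  have hM0 : 0 ≤ M := (abs_nonneg (g 0)).trans (hM 0)
  set c : ℝ := C₀ * (1 + M ^ (4 - κ)) with hc_def
  have hc : 0 ≤ c := by positivity
  have hFeq : ∀ x : E3, fderiv ℝ (⇑g) x = fderivCLM ℝ E3 ℝ g x := fun x => (fderivCLM_apply ℝ g x).symm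
  have hpt : ∀ x : E3, ‖fderiv ℝ (fun y => f (g y)) x‖ ≤ c * ‖fderiv ℝ (⇑g) x‖ := by
    intro x
    have hfd : DifferentiableAt ℝ f (g x) := (hf.differentiable one_ne_zero).differentiableAt
    have hcomp : fderiv ℝ (fun y => f (g y)) x = (fderiv ℝ f (g x)).comp (fderiv ℝ (⇑g) x) :=
      fderiv_comp x hfd g.differentiableAt
    rw [hcomp]
    refine le_trans (ContinuousLinearMap.opNorm_comp_le _ _) ?_
    refine mul_le_mul_of_nonneg_right ?_ (norm_nonneg _)
    refine le_trans (norm_fderiv_le_abs_deriv f (g x)) (le_trans (hgrowth (g x)) ?_)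
    refine mul_le_mul_of_nonneg_left ?_ hC₀.le
    have := Real.rpow_le_rpow (abs_nonneg (g x)) (hM x) hκ4
    linarith
  have hint : ∫ x : E3, ‖fderiv ℝ (fun y => f (g y)) x‖ ^ 2
      ≤ c ^ 2 * ∫ x : E3, ‖fderivCLM ℝ E3 ℝ g x‖ ^ 2 := by
    rw [← integral_const_mul]
    apply integral_mono_of_nonneg
    · filter_upwards with x; positivity
    · exact (integrable_norm_sq (fderivCLM ℝ E3 ℝ g)).const_mul _
    · filter_upwards with x
      have h2 : ‖fderiv ℝ (fun y => f (g y)) x‖ ^ 2 ≤ (c * ‖fderiv ℝ (⇑g) x‖) ^ 2 :=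
        pow_le_pow_left₀ (norm_nonneg _) (hpt x) 2
      rw [hFeq x] at h2
      calc ‖fderiv ℝ (fun y => f (g y)) x‖ ^ 2 ≤ (c * ‖fderivCLM ℝ E3 ℝ g x‖) ^ 2 := h2
        _ = c ^ 2 * ‖fderivCLM ℝ E3 ℝ g x‖ ^ 2 := by ring
  have hnn : 0 ≤ ∫ x : E3, ‖fderiv ℝ (fun y => f (g y)) x‖ ^ 2 :=
    integral_nonneg fun x => by positivity
  have hnn2 : 0 ≤ ∫ x : E3, ‖fderivCLM ℝ E3 ℝ g x‖ ^ 2 :=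
    integral_nonneg fun x => by positivity
  calc (∫ x : E3, ‖fderiv ℝ (fun y => f (g y)) x‖ ^ 2) ^ ((1:ℝ)/2)
      ≤ (c ^ 2 * ∫ x : E3, ‖fderivCLM ℝ E3 ℝ g x‖ ^ 2) ^ ((1:ℝ)/2) :=
        Real.rpow_le_rpow hnn hint (by norm_num)
    _ = c * (∫ x : E3, ‖fderivCLM ℝ E3 ℝ g x‖ ^ 2) ^ ((1:ℝ)/2) := by
        rw [Real.mul_rpow (sq_nonneg c) hnn2, ← Real.rpow_natCast c 2, ← Real.rpow_mul hc]
        norm_num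
    _ = c * (∫ x : E3, ‖fderiv ℝ (⇑g) x‖ ^ 2) ^ ((1:ℝ)/2) := by
        simp_rw [hFeq]

def Jfun : 𝓢(E3, ℝ) → ℝ := fun g =>
  (SchwartzMap.seminorm ℝ 0 0 (fderivCLM ℝ E3 ℝ g) *
    (c₀ * (SchwartzMap.seminorm ℝ 0 0 (fderivCLM ℝ E3 ℝ g)
      + SchwartzMap.seminorm ℝ P 0 (fderivCLM ℝ E3 ℝ g)))) ^ ((1:ℝ)/2)

lemma cont_seminorm (k n : ℕ) :
    Continuous fun g : 𝓢(E3, E3 →L[ℝ] ℝ) => SchwartzMap.seminorm ℝ k n g :=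
  (schwartz_withSeminorms ℝ E3 (E3 →L[ℝ] ℝ)).continuous_seminorm (k, n)

lemma continuous_rpow_half : Continuous fun x : ℝ => x ^ ((1:ℝ)/2) :=
  continuous_iff_continuousAt.2 fun x =>
    Real.continuousAt_rpow_const x _ (Or.inr (by norm_num))

lemma Jfun_continuous : Continuous Jfun := by
  apply continuous_rpow_half.comp
  exact (((cont_seminorm 0 0).comp (fderivCLM ℝ E3 ℝ).continuous).mul
    (continuous_const.mul (((cont_seminorm 0 0).comp (fderivCLM ℝ E3 ℝ).continuous).add
      ((cont_seminorm P 0).comp (fderivCLM ℝ E3 ℝ).continuous))))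

lemma B_le_Jfun (g : 𝓢(E3, ℝ)) :
    (∫ x : E3, ‖fderiv ℝ (⇑g) x‖ ^ 2) ^ ((1:ℝ)/2) ≤ Jfun g := by
  have heq : (fun x : E3 => ‖fderiv ℝ (⇑g) x‖ ^ 2)
      = fun x : E3 => ‖fderivCLM ℝ E3 ℝ g x‖ ^ 2 := by
    ext x; rw [fderivCLM_apply]
  rw [show (∫ x : E3, ‖fderiv ℝ (⇑g) x‖ ^ 2) = ∫ x : E3, ‖fderivCLM ℝ E3 ℝ g x‖ ^ 2 by rw [heq]]
  exact Real.rpow_le_rpow (integral_nonneg fun x => by positivity)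
    (integral_norm_sq_le (fderivCLM ℝ E3 ℝ g)) (by norm_num)

end CompAux

open CompAux

/-- Estimate of the `L¹(0,τ;Ḣ¹)`-norm of the composition `f(u)` through the Strichartz
norm `L⁴(0,τ;L^∞)` and the energy norm `L^∞(0,τ;Ḣ¹)` of `u`, for a nonlinearity whose
derivative has growth of order `4-κ`. -/
theorem composition_H1_estimate (κ C₀ : ℝ) (hκ : 0 < κ) (hκ' : κ ≤ 3) (hC₀ : 0 < C₀) :
    ∃ C₁ : ℝ, 0 < C₁ ∧
      ∀ f : ℝ → ℝ, ContDiff ℝ 1 f →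
        (∀ s : ℝ, |deriv f s| ≤ C₀ * (1 + |s| ^ (4 - κ))) →
        ∀ τ : ℝ, 0 < τ → τ ≤ 1 →
        ∀ u : ℝ → SchwartzMap E3 ℝ, ContinuousOn u (Icc 0 τ) →
          (∫ t in Ioc (0:ℝ) τ,
              (∫ x : E3, ‖fderiv ℝ (fun y => f (u t y)) x‖ ^ 2) ^ ((1:ℝ)/2))
            ≤ C₁ * τ ^ (κ/4) * (1 + ∫ t in Ioc (0:ℝ) τ, (⨆ x : E3, |u t x|) ^ 4)
              * ⨆ t ∈ Icc (0:ℝ) τ,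
                  (∫ x : E3, ‖fderiv ℝ (fun y : E3 => u t y) x‖ ^ 2) ^ ((1:ℝ)/2) := by
  refine ⟨2 * C₀, by positivity, ?_⟩
  intro f hf hgrowth τ hτ hτ1 u hu
  have hκ4 : (0:ℝ) ≤ 4 - κ := by linarith
  -- abbreviations
  set M : ℝ → ℝ := fun t => ⨆ x : E3, |u t x| with hM_def
  set B : ℝ → ℝ :=
    fun t => (∫ x : E3, ‖fderiv ℝ (fun y : E3 => u t y) x‖ ^ 2) ^ ((1:ℝ)/2) with hB_def
  set S : ℝ := ⨆ t ∈ Icc (0:ℝ) τ, B t with hS_def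
  have hB0 : ∀ t, 0 ≤ B t := fun t =>
    Real.rpow_nonneg (integral_nonneg fun x => by positivity) _
  have hM0 : ∀ t, 0 ≤ M t := fun t => Real.iSup_nonneg fun x => abs_nonneg _
  have hMt : ∀ t (x : E3), |u t x| ≤ M t := by
    intro t x
    refine le_ciSup (f := fun x : E3 => |u t x|) ⟨SchwartzMap.seminorm ℝ 0 0 (u t), ?_⟩ x
    rintro _ ⟨y, rfl⟩
    simpa [Real.norm_eq_abs] using norm_le_seminorm ℝ (u t) y
  -- continuity of M on Icc
  have hMeq : ∀ t, M t = ‖toBoundedContinuousFunctionCLM ℝ E3 ℝ (u t)‖ := by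
    intro t
    rw [BoundedContinuousFunction.norm_eq_iSup_norm]
    simp [Real.norm_eq_abs, hM_def]
  have hMcont : ContinuousOn M (Icc 0 τ) := by
    have : M = fun t => ‖toBoundedContinuousFunctionCLM ℝ E3 ℝ (u t)‖ := funext hMeq
    rw [this]
    exact ((toBoundedContinuousFunctionCLM ℝ E3 ℝ).continuous.norm).comp_continuousOn hu
  -- B t ≤ S for t in Icc
  obtain ⟨K, hK⟩ := isCompact_Icc.exists_bound_of_continuousOn
    (Jfun_continuous.comp_continuousOn hu)
  have hBK : ∀ t ∈ Icc (0:ℝ) τ, B t ≤ max K 0 := by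
    intro t ht
    calc B t ≤ Jfun (u t) := B_le_Jfun (u t)
      _ ≤ ‖Jfun (u t)‖ := le_abs_self _
      _ ≤ K := hK t ht
      _ ≤ max K 0 := le_max_left _ _
  have hbddS : BddAbove (range fun t => ⨆ _ : t ∈ Icc (0:ℝ) τ, B t) := by
    refine ⟨max K 0, ?_⟩
    rintro _ ⟨t, rfl⟩
    exact Real.iSup_le (fun h => hBK t h) (le_max_right _ _)
  have hBS : ∀ t ∈ Icc (0:ℝ) τ, B t ≤ S := by
    intro t ht
    have h1 : B t = ⨆ _ : t ∈ Icc (0:ℝ) τ, B t :=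
      (ciSup_pos (f := fun _ : t ∈ Icc (0:ℝ) τ => B t) ht).symm
    rw [hS_def, h1]
    exact le_ciSup hbddS t
  have hS0 : 0 ≤ S :=
    Real.iSup_nonneg fun t => Real.iSup_nonneg fun _ => hB0 t
  -- pointwise-in-time bound
  have h1 : ∀ t ∈ Ioc (0:ℝ) τ,
      (∫ x : E3, ‖fderiv ℝ (fun y => f (u t y)) x‖ ^ 2) ^ ((1:ℝ)/2)
        ≤ (C₀ * S) * (1 + M t ^ (4 - κ)) := by
    intro t ht
    have hp := pertime hf hC₀ hκ4 hgrowth (u t) (hMt t)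
    have hBt : B t ≤ S := hBS t (Ioc_subset_Icc_self ht)
    calc (∫ x : E3, ‖fderiv ℝ (fun y => f (u t y)) x‖ ^ 2) ^ ((1:ℝ)/2)
        ≤ (C₀ * (1 + M t ^ (4 - κ))) * B t := hp
      _ ≤ (C₀ * (1 + M t ^ (4 - κ))) * S := by
          apply mul_le_mul_of_nonneg_left hBt
          have := hM0 t
          positivity
      _ = (C₀ * S) * (1 + M t ^ (4 - κ)) := by ring
  -- integrability of the dominating functions
  have hcont1 : ContinuousOn (fun t => (C₀ * S) * (1 + M t ^ (4 - κ))) (Icc 0 τ) := by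
    apply ContinuousOn.mul continuousOn_const
    exact continuousOn_const.add (hMcont.rpow_const fun t _ => Or.inr hκ4)
  have hint1 : IntegrableOn (fun t => (C₀ * S) * (1 + M t ^ (4 - κ))) (Ioc 0 τ) :=
    (hcont1.integrableOn_Icc).mono_set Ioc_subset_Icc_self
  have hcontM4 : ContinuousOn (fun t => M t ^ (4:ℕ)) (Icc 0 τ) := hMcont.pow 4
  have hintM4 : IntegrableOn (fun t => M t ^ (4:ℕ)) (Ioc 0 τ) :=
    (hcontM4.integrableOn_Icc).mono_set Ioc_subset_Icc_self
  -- first integral comparison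
  have h2 : (∫ t in Ioc (0:ℝ) τ,
      (∫ x : E3, ‖fderiv ℝ (fun y => f (u t y)) x‖ ^ 2) ^ ((1:ℝ)/2))
      ≤ ∫ t in Ioc (0:ℝ) τ, (C₀ * S) * (1 + M t ^ (4 - κ)) := by
    apply integral_mono_of_nonneg
    · filter_upwards with t
      exact Real.rpow_nonneg (integral_nonneg fun x => by positivity) _
    · exact hint1
    · exact (ae_restrict_iff' measurableSet_Ioc).mpr (ae_of_all _ h1)
  -- second integral comparison (Young)
  have h3 : (∫ t in Ioc (0:ℝ) τ, (1 + M t ^ (4 - κ)))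
      ≤ ∫ t in Ioc (0:ℝ) τ, ((1 + τ ^ ((κ - 4)/4)) + τ ^ (κ/4) * M t ^ (4:ℕ)) := by
    apply integral_mono_of_nonneg
    · filter_upwards with t
      have := Real.rpow_nonneg (hM0 t) (4 - κ)
      simp only [Pi.zero_apply]
      linarith
    · apply Integrable.add
      · exact integrableOn_const measure_Ioc_lt_top.ne
      · exact hintM4.const_mul _
    · filter_upwards with t
      have := young_aux hκ hκ' hτ (hM0 t)
      linarith
  have hvol : (volume (Ioc (0:ℝ) τ)).toReal = τ := by
    rw [Real.volume_Ioc, sub_zero, ENNReal.toReal_ofReal hτ.le]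
  have h4 : (∫ t in Ioc (0:ℝ) τ, ((1 + τ ^ ((κ - 4)/4)) + τ ^ (κ/4) * M t ^ (4:ℕ)))
      = (1 + τ ^ ((κ - 4)/4)) * τ
        + τ ^ (κ/4) * ∫ t in Ioc (0:ℝ) τ, M t ^ (4:ℕ) := by
    rw [integral_add (integrableOn_const (C := (1 + τ ^ ((κ - 4)/4))) measure_Ioc_lt_top.ne)
      (hintM4.const_mul _), setIntegral_const, integral_const_mul]
    rw [measureReal_def, hvol, smul_eq_mul, mul_comm]
  -- arithmetic with powers of τ
  have hττ : τ * τ ^ ((κ - 4)/4) = τ ^ (κ/4) := by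
    nth_rewrite 1 [← Real.rpow_one τ]
    rw [← Real.rpow_add hτ]
    congr 1
    ring
  have hτle : τ ≤ τ ^ (κ/4) := by
    nth_rewrite 1 [← Real.rpow_one τ]
    exact Real.rpow_le_rpow_of_exponent_ge hτ hτ1 (by linarith [div_le_one_of_le₀ (by linarith : κ ≤ 4) (by norm_num : (0:ℝ) ≤ 4)])
  have hIM4 : 0 ≤ ∫ t in Ioc (0:ℝ) τ, M t ^ (4:ℕ) :=
    integral_nonneg fun t => by positivity
  have hτκ : 0 ≤ τ ^ (κ/4) := Real.rpow_nonneg hτ.le _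
  have h5 : (∫ t in Ioc (0:ℝ) τ, (1 + M t ^ (4 - κ)))
      ≤ 2 * τ ^ (κ/4) * (1 + ∫ t in Ioc (0:ℝ) τ, M t ^ (4:ℕ)) := by
    have := h3
    rw [h4] at this
    have hexp : (1 + τ ^ ((κ - 4)/4)) * τ = τ + τ ^ (κ/4) := by
      rw [add_mul, one_mul, mul_comm, hττ]
    rw [hexp] at this
    nlinarith [hτκ, hIM4, hτle]
  -- conclusion
  have hfinal : (∫ t in Ioc (0:ℝ) τ, (C₀ * S) * (1 + M t ^ (4 - κ)))
      ≤ 2 * C₀ * τ ^ (κ/4) * (1 + ∫ t in Ioc (0:ℝ) τ, M t ^ (4:ℕ)) * S := by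
    rw [integral_const_mul]
    calc (C₀ * S) * ∫ t in Ioc (0:ℝ) τ, (1 + M t ^ (4 - κ))
        ≤ (C₀ * S) * (2 * τ ^ (κ/4) * (1 + ∫ t in Ioc (0:ℝ) τ, M t ^ (4:ℕ))) :=
          mul_le_mul_of_nonneg_left h5 (by positivity)
      _ = 2 * C₀ * τ ^ (κ/4) * (1 + ∫ t in Ioc (0:ℝ) τ, M t ^ (4:ℕ)) * S := by ring
  exact h2.trans hfinal
end
end

section
/- Let X be a metric space and let S : [0,∞) → X → X satisfy S(0) = id, S(t+s) = S(t) ∘ S(s) for all t,s ≥ 0, and each map S(t) : X → X is continuous. Assume: (i) there is a bounded set B ⊆ X that attracts bounded sets, i.e. for every bounded B' ⊆ X and every ε > 0 there is T ≥ 0 such that S(t)(B') is contained in the ε-thickening of B for all t ≥ T; (ii) S is asymptotically compact, i.e. for every bounded B' ⊆ X, every sequence (xₙ) in B' and every sequence tₙ → ∞, the sequence (S(tₙ)(xₙ)) has a convergent subsequence. Then there exists a set 𝒜 ⊆ X such that: 𝒜 is compact; 𝒜 is strictly invariant, S(t)(𝒜) = 𝒜 for all t ≥ 0; 𝒜 attracts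 bounded sets (for every bounded B' and every ε > 0 there is T with S(t)(B') contained in the ε-thickening of 𝒜 for all t ≥ T); and 𝒜 = { u(0) : u : ℝ → X has bounded range and u(t+h) = S(h)(u(t)) for all t ∈ ℝ and h ≥ 0 }. -/
open Set Filter Bornology

set_option maxHeartbeats 1000000 in
/-- Existence of the global attractor: a semigroup of continuous maps on a metric space
possessing a bounded attracting set and being asymptotically compact has a global
attractor, which is generated by all complete bounded trajectories. -/
theorem global_attractor_existence {X : Type*} [MetricSpace X]
    (S : ℝ → X → X)
    (hid : ∀ x : X, S 0 x = x)
    (hsemi : ∀ t ≥ (0:ℝ), ∀ s ≥ (0:ℝ), ∀ x : X, S (t + s) x = S t (S s x))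
    (hcont : ∀ t ≥ (0:ℝ), Continuous (S t))
    (B : Set X) (hB : IsBounded B)
    (habsorb : ∀ B' : Set X, IsBounded B' → ∀ ε > (0:ℝ),
      ∃ T ≥ (0:ℝ), ∀ t ≥ T, S t '' B' ⊆ Metric.thickening ε B)
    (hasympt : ∀ B' : Set X, IsBounded B' →
      ∀ x : ℕ → X, (∀ n, x n ∈ B') →
      ∀ ts : ℕ → ℝ, (∀ n, 0 ≤ ts n) → Tendsto ts atTop atTop →
      ∃ φ : ℕ → ℕ, StrictMono φ ∧
        ∃ y : X, Tendsto (fun n => S (ts (φ n)) (x (φ n))) atTop (nhds y)) :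
    ∃ A : Set X,
      IsCompact A ∧
      (∀ t ≥ (0:ℝ), S t '' A = A) ∧
      (∀ B' : Set X, IsBounded B' → ∀ ε > (0:ℝ),
        ∃ T ≥ (0:ℝ), ∀ t ≥ T, S t '' B' ⊆ Metric.thickening ε A) ∧
      A = {a : X | ∃ u : ℝ → X, IsBounded (range u) ∧
        (∀ t : ℝ, ∀ h ≥ (0:ℝ), u (t + h) = S h (u t)) ∧ u 0 = a} := by
  classical
  set ω : Set X := ⋂ (T : ℝ) (_ : 0 ≤ T), closure (⋃ (t : ℝ) (_ : T ≤ t), S t '' B) with hωdef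
  -- Key lemma: any limit of S (ts n) (x n) with x n in a bounded set and ts n → ∞ lies in ω.
  have hL : ∀ (B' : Set X), IsBounded B' → ∀ (x : ℕ → X) (ts : ℕ → ℝ),
      (∀ n, x n ∈ B') → (∀ n, 0 ≤ ts n) → Tendsto ts atTop atTop →
      ∀ y : X, Tendsto (fun n => S (ts n) (x n)) atTop (nhds y) → y ∈ ω := by
    intro B' hB' x ts hx hts htop y hy
    rw [hωdef]
    refine mem_iInter₂.2 fun T hT => ?_
    obtain ⟨N, hN⟩ := eventually_atTop.1 (htop.eventually_ge_atTop T)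
    have hts' : ∀ n : ℕ, 0 ≤ ts (n + N) - T := fun n =>
      sub_nonneg.2 (hN (n + N) (Nat.le_add_left N n))
    have htop' : Tendsto (fun n => ts (n + N) - T) atTop atTop := by
      simpa [sub_eq_add_neg] using
        tendsto_atTop_add_const_right atTop (-T) (htop.comp (tendsto_add_atTop_nat N))
    obtain ⟨φ, hφ, z, hz⟩ := hasympt B' hB' (fun n => x (n + N)) (fun n => hx (n + N))
      (fun n => ts (n + N) - T) hts' htop'
    have htopφ : Tendsto (fun n => ts (φ n + N) - T) atTop atTop :=
      htop'.comp hφ.tendsto_atTop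
    -- z is in the closure of B
    have hzB : z ∈ closure B := by
      rw [Metric.mem_closure_iff]
      intro ε hε
      obtain ⟨T₂, hT₂0, hT₂⟩ := habsorb B' hB' (ε/2) (by positivity)
      obtain ⟨M₁, hM₁⟩ := eventually_atTop.1 (htopφ.eventually_ge_atTop T₂)
      obtain ⟨M₂, hM₂⟩ := Metric.tendsto_atTop.1 hz (ε/2) (by positivity)
      set n := max M₁ M₂ with hn
      have h1 : S (ts (φ n + N) - T) (x (φ n + N)) ∈ Metric.thickening (ε/2) B :=
        hT₂ _ (hM₁ n (le_max_left _ _)) ⟨x (φ n + N), hx _, rfl⟩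
      obtain ⟨b, hb, hdb⟩ := Metric.mem_thickening_iff.1 h1
      refine ⟨b, hb, ?_⟩
      have h2 := hM₂ n (le_max_right _ _)
      calc dist z b ≤ dist z (S (ts (φ n + N) - T) (x (φ n + N)))
            + dist (S (ts (φ n + N) - T) (x (φ n + N))) b := dist_triangle _ _ _
        _ < ε/2 + ε/2 := by rw [dist_comm] at h2; exact add_lt_add h2 hdb
        _ = ε := by ring
    -- S T z = y
    have h3 : Tendsto (fun n => S T (S (ts (φ n + N) - T) (x (φ n + N)))) atTop
        (nhds (S T z)) := ((hcont T hT).tendsto z).comp hz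
    have h4 : ∀ n, S T (S (ts (φ n + N) - T) (x (φ n + N))) = S (ts (φ n + N)) (x (φ n + N)) := by
      intro n
      rw [← hsemi T hT (ts (φ n + N) - T) (hts' (φ n)), add_sub_cancel]
    simp only [h4] at h3
    have hφN : Tendsto (fun n => φ n + N) atTop atTop :=
      tendsto_atTop_mono (fun n => Nat.le_add_right (φ n) N) hφ.tendsto_atTop
    have h5 : Tendsto (fun n => S (ts (φ n + N)) (x (φ n + N))) atTop (nhds y) :=
      hy.comp hφN
    have hyz : y = S T z := tendsto_nhds_unique h5 h3
    have h6 : S T z ∈ closure (S T '' B) :=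
      image_closure_subset_closure_image (hcont T hT) ⟨z, hzB, rfl⟩
    rw [hyz]
    exact closure_mono (subset_iUnion₂ (s := fun t (_ : T ≤ t) => S t '' B) T le_rfl) h6
  -- Any point of ω is a limit of S (ts n) (x n), x n ∈ B, ts n ≥ n.
  have hgen : ∀ y ∈ ω, ∃ (x : ℕ → X) (ts : ℕ → ℝ), (∀ n, x n ∈ B) ∧ (∀ n : ℕ, (n:ℝ) ≤ ts n) ∧
      Tendsto (fun n => S (ts n) (x n)) atTop (nhds y) := by
    intro y hy
    have key : ∀ n : ℕ, ∃ (t : ℝ) (b : X), b ∈ B ∧ (n:ℝ) ≤ t ∧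
        dist (S t b) y < 1/(n+1) := by
      intro n
      have h1 : y ∈ closure (⋃ (t : ℝ) (_ : (n:ℝ) ≤ t), S t '' B) :=
        mem_iInter₂.1 hy (n:ℝ) (Nat.cast_nonneg n)
      obtain ⟨p, hp, hdist⟩ := Metric.mem_closure_iff.1 h1 (1/(n+1)) (by positivity)
      simp only [mem_iUnion] at hp
      obtain ⟨t, ht, b, hb, rfl⟩ := hp
      exact ⟨t, b, hb, ht, by rwa [dist_comm] at hdist⟩
    choose ts b hb hts hdist using key
    refine ⟨b, ts, hb, hts, tendsto_iff_dist_tendsto_zero.2 ?_⟩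
    refine squeeze_zero (fun n => dist_nonneg) (fun n => (hdist n).le) ?_
    exact tendsto_one_div_add_atTop_nhds_zero_nat
  have htsfacts : ∀ (ts : ℕ → ℝ), (∀ n : ℕ, (n:ℝ) ≤ ts n) →
      (∀ n, 0 ≤ ts n) ∧ Tendsto ts atTop atTop := by
    intro ts hts
    exact ⟨fun n => le_trans (Nat.cast_nonneg n) (hts n),
      tendsto_atTop_mono hts tendsto_natCast_atTop_atTop⟩
  -- ω is compact
  have hωcompact : IsCompact ω := by
    have hseq : IsSeqCompact ω := by
      intro y hy
      have key : ∀ k : ℕ, ∃ (t : ℝ) (b : X), b ∈ B ∧ (k:ℝ) ≤ t ∧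
          dist (S t b) (y k) < 1/(k+1) := by
        intro k
        have h1 : y k ∈ closure (⋃ (t : ℝ) (_ : (k:ℝ) ≤ t), S t '' B) :=
          mem_iInter₂.1 (hy k) (k:ℝ) (Nat.cast_nonneg k)
        obtain ⟨p, hp, hdist⟩ := Metric.mem_closure_iff.1 h1 (1/(k+1)) (by positivity)
        simp only [mem_iUnion] at hp
        obtain ⟨t, ht, b, hb, rfl⟩ := hp
        exact ⟨t, b, hb, ht, by rwa [dist_comm] at hdist⟩
      choose ts b hb hts hdist using key
      obtain ⟨hts0, htstop⟩ := htsfacts ts hts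
      obtain ⟨φ, hφ, z, hz⟩ := hasympt B hB b hb ts hts0 htstop
      have hzω : z ∈ ω := by
        refine hL B hB (fun n => b (φ n)) (fun n => ts (φ n)) (fun n => hb (φ n))
          (fun n => hts0 (φ n)) (htstop.comp hφ.tendsto_atTop) z hz
      refine ⟨z, hzω, φ, hφ, ?_⟩
      rw [tendsto_iff_dist_tendsto_zero]
      have hb1 : ∀ n, dist (y (φ n)) z ≤ 1/(φ n + 1) + dist (S (ts (φ n)) (b (φ n))) z := by
        intro n
        calc dist (y (φ n)) z ≤ dist (y (φ n)) (S (ts (φ n)) (b (φ n)))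
              + dist (S (ts (φ n)) (b (φ n))) z := dist_triangle _ _ _
          _ ≤ 1/(φ n + 1) + dist (S (ts (φ n)) (b (φ n))) z := by
              have := hdist (φ n)
              rw [dist_comm] at this
              exact add_le_add this.le le_rfl
      have hlim : Tendsto (fun n => 1/((φ n : ℝ) + 1) + dist (S (ts (φ n)) (b (φ n))) z)
          atTop (nhds 0) := by
        have l1 : Tendsto (fun n => 1/((φ n : ℝ) + 1)) atTop (nhds 0) :=
          tendsto_one_div_add_atTop_nhds_zero_nat.comp hφ.tendsto_atTop
        have l2 : Tendsto (fun n => dist (S (ts (φ n)) (b (φ n))) z) atTop (nhds 0) :=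
          tendsto_iff_dist_tendsto_zero.1 hz
        simpa using l1.add l2
      exact squeeze_zero (fun n => dist_nonneg) hb1 hlim
    exact hseq.isCompact
  -- ω is strictly invariant
  have hinv : ∀ t ≥ (0:ℝ), S t '' ω = ω := by
    intro t ht
    apply Subset.antisymm
    · rintro _ ⟨y, hy, rfl⟩
      obtain ⟨x, ts, hx, hts, hconv⟩ := hgen y hy
      obtain ⟨hts0, htstop⟩ := htsfacts ts hts
      have h1 : Tendsto (fun n => S t (S (ts n) (x n))) atTop (nhds (S t y)) :=
        ((hcont t ht).tendsto y).comp hconv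
      have h2 : ∀ n, S t (S (ts n) (x n)) = S (t + ts n) (x n) := fun n =>
        (hsemi t ht (ts n) (hts0 n) (x n)).symm
      simp only [h2] at h1
      exact hL B hB x (fun n => t + ts n) hx (fun n => add_nonneg ht (hts0 n))
        (tendsto_atTop_add_const_left atTop t htstop) (S t y) h1
    · intro y hy
      obtain ⟨x, ts, hx, hts, hconv⟩ := hgen y hy
      obtain ⟨hts0, htstop⟩ := htsfacts ts hts
      obtain ⟨N, hN⟩ := eventually_atTop.1 (htstop.eventually_ge_atTop t)
      have hts'' : ∀ n : ℕ, 0 ≤ ts (n + N) - t := fun n =>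
        sub_nonneg.2 (hN (n + N) (Nat.le_add_left N n))
      have htop' : Tendsto (fun n => ts (n + N) - t) atTop atTop := by
        simpa [sub_eq_add_neg] using
          tendsto_atTop_add_const_right atTop (-t) (htstop.comp (tendsto_add_atTop_nat N))
      obtain ⟨φ, hφ, z, hz⟩ := hasympt B hB (fun n => x (n + N)) (fun n => hx (n + N))
        (fun n => ts (n + N) - t) hts'' htop'
      have hzω : z ∈ ω :=
        hL B hB (fun n => x (φ n + N)) (fun n => ts (φ n + N) - t)
          (fun n => hx (φ n + N)) (fun n => hts'' (φ n))
          (htop'.comp hφ.tendsto_atTop) z hz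
      have h3 : Tendsto (fun n => S t (S (ts (φ n + N) - t) (x (φ n + N)))) atTop
          (nhds (S t z)) := ((hcont t ht).tendsto z).comp hz
      have h4 : ∀ n, S t (S (ts (φ n + N) - t) (x (φ n + N))) = S (ts (φ n + N)) (x (φ n + N)) := by
        intro n
        rw [← hsemi t ht (ts (φ n + N) - t) (hts'' (φ n)), add_sub_cancel]
      simp only [h4] at h3
      have hφN : Tendsto (fun n => φ n + N) atTop atTop :=
        tendsto_atTop_mono (fun n => Nat.le_add_right (φ n) N) hφ.tendsto_atTop
      have h5 : Tendsto (fun n => S (ts (φ n + N)) (x (φ n + N))) atTop (nhds y) :=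
        hconv.comp hφN
      exact ⟨z, hzω, (tendsto_nhds_unique h3 h5)⟩
  -- ω attracts bounded sets
  have hattr : ∀ B' : Set X, IsBounded B' → ∀ ε > (0:ℝ),
      ∃ T ≥ (0:ℝ), ∀ t ≥ T, S t '' B' ⊆ Metric.thickening ε ω := by
    intro B' hB' ε hε
    by_contra hcon
    push_neg at hcon
    have hcon' : ∀ n : ℕ, ∃ t ≥ (n:ℝ), ∃ x ∈ B', S t x ∉ Metric.thickening ε ω := by
      intro n
      obtain ⟨t, ht, hsub⟩ := hcon (n:ℝ) (Nat.cast_nonneg n)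
      rw [Set.not_subset] at hsub
      obtain ⟨p, hp, hnp⟩ := hsub
      obtain ⟨x, hx, rfl⟩ := hp
      exact ⟨t, ht, x, hx, hnp⟩
    choose ts hts x hx hnaway using hcon'
    obtain ⟨hts0, htstop⟩ := htsfacts ts hts
    obtain ⟨φ, hφ, z, hz⟩ := hasympt B' hB' x hx ts hts0 htstop
    have hzω : z ∈ ω :=
      hL B' hB' (fun n => x (φ n)) (fun n => ts (φ n)) (fun n => hx (φ n))
        (fun n => hts0 (φ n)) (htstop.comp hφ.tendsto_atTop) z hz
    obtain ⟨M, hM⟩ := Metric.tendsto_atTop.1 hz ε hε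
    exact hnaway (φ M) (Metric.mem_thickening_iff.2 ⟨z, hzω, hM M le_rfl⟩)
  -- the trajectory set equals ω
  have htraj : ω = {a : X | ∃ u : ℝ → X, IsBounded (range u) ∧
      (∀ t : ℝ, ∀ h ≥ (0:ℝ), u (t + h) = S h (u t)) ∧ u 0 = a} := by
    apply Subset.antisymm
    · -- ω ⊆ trajectories : construct a complete bounded trajectory through each a ∈ ω
      intro a ha
      have hback : ∀ y : {y : X // y ∈ ω}, ∃ z : {y : X // y ∈ ω}, S 1 z.1 = y.1 := by
        rintro ⟨y, hy⟩
        rw [← hinv 1 zero_le_one] at hy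
        obtain ⟨z, hz, hzy⟩ := hy
        exact ⟨⟨z, hz⟩, hzy⟩
      choose F hF using hback
      set a' : ℕ → X := fun n => (F^[n] ⟨a, ha⟩).1 with ha'
      have ha'ω : ∀ n, a' n ∈ ω := fun n => (F^[n] ⟨a, ha⟩).2
      have ha'step : ∀ n, S 1 (a' (n+1)) = a' n := by
        intro n
        have hit : F^[n+1] (⟨a, ha⟩ : {y : X // y ∈ ω}) = F (F^[n] ⟨a, ha⟩) :=
          Function.iterate_succ_apply' F n _
        rw [ha']
        simp only [hit]
        exact hF _
      have ha'0 : a' 0 = a := rfl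
      have hW : ∀ (t : ℝ) (n m : ℕ), n ≤ m → 0 ≤ t + n →
          S (t + m) (a' m) = S (t + n) (a' n) := by
        intro t n m hnm h0
        induction m, hnm using Nat.le_induction with
        | base => rfl
        | succ m hm ih =>
          have h0m : 0 ≤ t + (m:ℝ) :=
            le_trans h0 (add_le_add_right (Nat.cast_le.2 hm) t)
          have hc : (↑(m+1) : ℝ) = (m:ℝ) + 1 := by push_cast; ring
          rw [hc, ← add_assoc, hsemi (t + (m:ℝ)) h0m 1 zero_le_one, ha'step m, ih]
      set u : ℝ → X := fun t => S (t + ⌈-t⌉₊) (a' ⌈-t⌉₊) with hu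
      have hu_eq : ∀ (t : ℝ) (n : ℕ), 0 ≤ t + n → u t = S (t + n) (a' n) := by
        intro t n h0
        have h0' : 0 ≤ t + (⌈-t⌉₊ : ℝ) := by
          have := Nat.le_ceil (-t); linarith
        rw [hu]
        rcases le_total n ⌈-t⌉₊ with h | h
        · exact hW t n ⌈-t⌉₊ h h0
        · exact (hW t ⌈-t⌉₊ n h h0').symm
      refine ⟨u, ?_, ?_, ?_⟩
      · apply hωcompact.isBounded.subset
        rintro _ ⟨t, rfl⟩
        have h0' : 0 ≤ t + (⌈-t⌉₊ : ℝ) := by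
          have := Nat.le_ceil (-t); linarith
        rw [hu_eq t ⌈-t⌉₊ h0', ← hinv (t + ⌈-t⌉₊) h0']
        exact ⟨a' ⌈-t⌉₊, ha'ω _, rfl⟩
      · intro t h hh
        have h0' : 0 ≤ t + (⌈-t⌉₊ : ℝ) := by
          have := Nat.le_ceil (-t); linarith
        have h0'' : 0 ≤ (t + h) + (⌈-t⌉₊ : ℝ) := by linarith
        rw [hu_eq (t+h) ⌈-t⌉₊ h0'', hu_eq t ⌈-t⌉₊ h0',
          show t + h + (⌈-t⌉₊:ℝ) = h + (t + ⌈-t⌉₊) by ring]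
        exact hsemi h hh (t + ⌈-t⌉₊) h0' _
      · have h00 : u 0 = S ((0:ℝ) + ((0:ℕ):ℝ)) (a' 0) := hu_eq 0 0 (by norm_num)
        simpa [hid, ha'0] using h00
    · -- trajectories ⊆ ω
      rintro a ⟨u, huB, hflow, hu0⟩
      have hkey : ∀ n : ℕ, S (n:ℝ) (u (-(n:ℝ))) = a := by
        intro n
        have hh := hflow (-(n:ℝ)) (n:ℝ) (Nat.cast_nonneg n)
        rw [show -(n:ℝ) + n = 0 by ring] at hh
        rw [← hh, hu0]
      refine hL (range u) huB (fun n => u (-(n:ℝ))) (fun n => (n:ℝ)) (fun n => ⟨_, rfl⟩)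
        (fun n => Nat.cast_nonneg n) tendsto_natCast_atTop_atTop a ?_
      simp only [hkey]
      exact tendsto_const_nhds
  exact ⟨ω, hωcompact, hinv, hattr, htraj⟩
end

section
/- Let X be a metric space and let S : [0,∞) × X → X be jointly continuous with S(0,x) = x and S(t+s,x) = S(t, S(s,x)) for all t,s ≥ 0 and x ∈ X. Assume there exists a compact set 𝒜 ⊆ X that attracts bounded sets, i.e. for every bounded B' ⊆ X and every ε > 0 there is T ≥ 0 such that S(t,·)(B') is contained in the ε-thickening of 𝒜 for all t ≥ T. Then every function u : ℝ → X with bounded range satisfying u(t+h) = S(h, u(t)) for all t ∈ ℝ and h ≥ 0 takes values in 𝒜 and is continuous, and the set 𝒦 of all such functions is a compact subset of the space C(ℝ, X) of continuous maps from ℝ to X equipped with the compact-open topology (the topology of uniform convergence on compact time intervals). -/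
open Set Filter Bornology

/-- Compactness of the set of complete bounded trajectories: if a jointly continuous
semigroup on a metric space has a compact attracting set `A`, then every complete
bounded trajectory takes values in `A` and is continuous, and the set of all complete
bounded trajectories is compact in `C(ℝ, X)` with the compact-open topology. -/
theorem complete_trajectories_compact {X : Type*} [MetricSpace X]
    (S : ℝ → X → X)
    (hid : ∀ x : X, S 0 x = x)
    (hsemi : ∀ t ≥ (0:ℝ), ∀ s ≥ (0:ℝ), ∀ x : X, S (t + s) x = S t (S s x))
    (hcont : ContinuousOn (fun p : ℝ × X => S p.1 p.2) ((Ici 0) ×ˢ univ))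
    (A : Set X) (hAcomp : IsCompact A)
    (hattr : ∀ B' : Set X, IsBounded B' → ∀ ε > (0:ℝ),
      ∃ T ≥ (0:ℝ), ∀ t ≥ T, S t '' B' ⊆ Metric.thickening ε A) :
    (∀ u : ℝ → X, IsBounded (range u) →
      (∀ t : ℝ, ∀ h ≥ (0:ℝ), u (t + h) = S h (u t)) →
      (∀ t : ℝ, u t ∈ A) ∧ Continuous u) ∧
    IsCompact {φ : C(ℝ, X) | IsBounded (range φ) ∧
      ∀ t : ℝ, ∀ h ≥ (0:ℝ), φ (t + h) = S h (φ t)} := by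
  -- continuity of any function satisfying the functional equation
  have cont_of_eq : ∀ u : ℝ → X,
      (∀ t : ℝ, ∀ h ≥ (0:ℝ), u (t + h) = S h (u t)) → Continuous u := by
    intro u hu
    rw [continuous_iff_continuousAt]
    intro t₀
    have hmap : MapsTo (fun t : ℝ => ((t - t₀ + 1 : ℝ), u (t₀ - 1)))
        (Ici (t₀ - 1)) ((Ici (0:ℝ)) ×ˢ (univ : Set X)) := by
      intro t ht
      refine ⟨?_, trivial⟩
      simp only [mem_Ici] at ht ⊢
      linarith
    have hg : ContinuousOn (fun t : ℝ => S (t - t₀ + 1) (u (t₀ - 1))) (Ici (t₀ - 1)) :=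
      hcont.comp (Continuous.continuousOn (by fun_prop)) hmap
    have hg' : ContinuousAt (fun t : ℝ => S (t - t₀ + 1) (u (t₀ - 1))) t₀ :=
      hg.continuousAt (Ici_mem_nhds (by linarith))
    refine hg'.congr ?_
    filter_upwards [Ici_mem_nhds (show t₀ - 1 < t₀ by linarith)] with t ht
    have ht' : (0:ℝ) ≤ t - t₀ + 1 := by
      simp only [mem_Ici] at ht; linarith
    have := hu (t₀ - 1) (t - t₀ + 1) ht'
    rw [show t₀ - 1 + (t - t₀ + 1) = t by ring] at this
    exact this.symm
  -- membership in A for bounded trajectories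
  have mem_A : ∀ u : ℝ → X, IsBounded (range u) →
      (∀ t : ℝ, ∀ h ≥ (0:ℝ), u (t + h) = S h (u t)) → ∀ t : ℝ, u t ∈ A := by
    intro u hb hu t
    have hcl : u t ∈ closure A := by
      rw [Metric.mem_closure_iff]
      intro ε hε
      obtain ⟨T, hT0, hT⟩ := hattr (range u) hb ε hε
      have h1 : u t = S T (u (t - T)) := by
        have := hu (t - T) T hT0
        rwa [show t - T + T = t by ring] at this
      have h2 : u t ∈ Metric.thickening ε A := by
        apply hT T le_rfl
        exact ⟨u (t - T), mem_range_self _, h1.symm⟩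
      rw [Metric.mem_thickening_iff] at h2
      obtain ⟨z, hz, hdz⟩ := h2
      exact ⟨z, hz, hdz⟩
    rwa [hAcomp.isClosed.closure_eq] at hcl
  refine ⟨fun u hb hu => ⟨mem_A u hb hu, cont_of_eq u hu⟩, ?_⟩
  set 𝒦 : Set C(ℝ, X) := {φ : C(ℝ, X) | IsBounded (range φ) ∧
      ∀ t : ℝ, ∀ h ≥ (0:ℝ), φ (t + h) = S h (φ t)} with h𝒦
  -- continuity of each time map
  have hSh : ∀ h ≥ (0:ℝ), Continuous (S h) := by
    intro h hh
    have h2 : ContinuousOn ((fun p : ℝ × X => S p.1 p.2) ∘ (fun x : X => ((h:ℝ), x))) univ :=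
      hcont.comp (continuous_const.prodMk continuous_id).continuousOn
        (fun x _ => ⟨hh, trivial⟩)
    rwa [← continuousOn_univ]
  -- the pointwise set of trajectories
  set F : Set (ℝ → X) := {f : ℝ → X | (∀ t : ℝ, f t ∈ A) ∧
      ∀ t : ℝ, ∀ h ≥ (0:ℝ), f (t + h) = S h (f t)} with hF
  have hFclosed : IsClosed F := by
    have : F = (⋂ t : ℝ, {f : ℝ → X | f t ∈ A}) ∩
        (⋂ t : ℝ, ⋂ h ∈ Ici (0:ℝ), {f : ℝ → X | f (t + h) = S h (f t)}) := by
      ext f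
      simp only [hF, mem_setOf_eq, mem_inter_iff, mem_iInter, mem_Ici]
    rw [this]
    refine IsClosed.inter (isClosed_iInter fun t => ?_)
      (isClosed_iInter fun t => isClosed_iInter fun h => isClosed_iInter fun hh => ?_)
    · exact hAcomp.isClosed.preimage (continuous_apply t)
    · exact isClosed_eq (continuous_apply (t + h)) ((hSh h hh).comp (continuous_apply t))
  have hFcomp : IsCompact F := by
    refine IsCompact.of_isClosed_subset (isCompact_univ_pi fun _ : ℝ => hAcomp) hFclosed ?_
    intro f hf
    exact fun t _ => hf.1 t
  have himage : ContinuousMap.toFun '' 𝒦 = F := by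
    ext f
    constructor
    · rintro ⟨u, hu, rfl⟩
      exact ⟨mem_A u hu.1 hu.2, hu.2⟩
    · intro hf
      have hc : Continuous f := cont_of_eq f hf.2
      refine ⟨ContinuousMap.mk f hc, ⟨?_, hf.2⟩, rfl⟩
      exact hAcomp.isBounded.subset (range_subset_iff.mpr hf.1)
  -- equicontinuity
  have hequi : Equicontinuous ((↑) : 𝒦 → ℝ → X) := by
    intro t₀
    rw [Metric.equicontinuousAt_iff]
    intro ε hε
    have hKc : IsCompact ((Icc (0:ℝ) 2) ×ˢ A) := isCompact_Icc.prod hAcomp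
    have hUC : UniformContinuousOn (fun p : ℝ × X => S p.1 p.2) ((Icc (0:ℝ) 2) ×ˢ A) := by
      apply hKc.uniformContinuousOn_of_continuous
      exact hcont.mono (prod_mono Icc_subset_Ici_self (subset_univ A))
    rw [Metric.uniformContinuousOn_iff] at hUC
    obtain ⟨δ, hδ, hδ'⟩ := hUC ε hε
    refine ⟨min δ 1, lt_min hδ one_pos, fun t ht u => ?_⟩
    obtain ⟨u, hu⟩ := u
    have ha : u (t₀ - 1) ∈ A := mem_A u hu.1 hu.2 (t₀ - 1)
    have hdt : |t - t₀| < min δ 1 := by rwa [Real.dist_eq] at ht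
    have h1 : (0:ℝ) ≤ t - t₀ + 1 := by
      have := abs_lt.mp (lt_of_lt_of_le hdt (min_le_right _ _))
      linarith [this.1]
    have h2 : t - t₀ + 1 ≤ 2 := by
      have := abs_lt.mp (lt_of_lt_of_le hdt (min_le_right _ _))
      linarith [this.2]
    have hut : u t = S (t - t₀ + 1) (u (t₀ - 1)) := by
      have := hu.2 (t₀ - 1) (t - t₀ + 1) h1
      rwa [show t₀ - 1 + (t - t₀ + 1) = t by ring] at this
    have hut₀ : u t₀ = S 1 (u (t₀ - 1)) := by
      have := hu.2 (t₀ - 1) 1 zero_le_one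
      rwa [show t₀ - 1 + 1 = t₀ by ring] at this
    have hmem1 : ((t - t₀ + 1 : ℝ), u (t₀ - 1)) ∈ (Icc (0:ℝ) 2) ×ˢ A := ⟨⟨h1, h2⟩, ha⟩
    have hmem2 : ((1 : ℝ), u (t₀ - 1)) ∈ (Icc (0:ℝ) 2) ×ˢ A :=
      ⟨⟨zero_le_one, one_le_two⟩, ha⟩
    have hdp : dist ((t - t₀ + 1 : ℝ), u (t₀ - 1)) ((1 : ℝ), u (t₀ - 1)) < δ := by
      rw [Prod.dist_eq]
      simp only [dist_self]
      rw [max_eq_left dist_nonneg, Real.dist_eq]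
      calc |t - t₀ + 1 - 1| = |t - t₀| := by ring_nf
        _ < min δ 1 := hdt
        _ ≤ δ := min_le_left _ _
    have := hδ' _ hmem1 _ hmem2 hdp
    simp only [ContinuousMap.coe_mk]
    rw [hut, hut₀]
    rw [dist_comm]
    exact this
  exact ArzelaAscoli.isCompact_of_equicontinuous 𝒦 (himage ▸ hFcomp) hequi
end
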